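/- arXiv:1203.1821 — 5 statements merged into one kernel-verified Lean document; each statement's English description precedes it below -/
import Mathlib

section
/- Let Q̃ be Hermitian positive definite and define F(X,Y) = Q + (V*XV + W*XW) − (U*YU + B*YB) on Hermitian matrices. Set δ = 2·max{‖Q̃^{−1/2}(V Q̃ V* + W Q̃ W*)Q̃^{−1/2}‖, ‖Q̃^{−1/2}(U Q̃ U* + B Q̃ B*)Q̃^{−1/2}‖}. Then for all Hermitian X ≥ J and Y ≤ K, ‖F(X,Y) − F(J,K)‖_{1,Q̃} ≤ (δ/2)(‖X − J‖_{1,Q̃} + ‖K − Y‖_{1,Q̃}). -/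
open Matrix Filter
open scoped ComplexOrder

/-- The spectral norm (operator norm) of a complex matrix. -/
noncomputable def specNorm {N : ℕ} (A : Matrix (Fin N) (Fin N) ℂ) : ℝ :=
  ‖(Matrix.toEuclideanCLM (𝕜 := ℂ) A : EuclideanSpace ℂ (Fin N) →L[ℂ] EuclideanSpace ℂ (Fin N))‖

/-- The trace norm (sum of singular values) of a complex matrix. -/
noncomputable def traceNorm {N : ℕ} (A : Matrix (Fin N) (Fin N) ℂ) : ℝ :=
  ∑ i, Real.sqrt ((Matrix.posSemidef_conjTranspose_mul_self A).1.eigenvalues i)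

variable {N : ℕ}

section sqrtPort
open scoped MatrixOrder

/-- The square root of a positive semidefinite matrix via the spectral theorem. -/
noncomputable def Matrix.PosSemidef.sqrt {M : Matrix (Fin N) (Fin N) ℂ} (hM : M.PosSemidef) :
    Matrix (Fin N) (Fin N) ℂ :=
  (hM.1.eigenvectorUnitary : Matrix (Fin N) (Fin N) ℂ) *
    diagonal ((↑) ∘ Real.sqrt ∘ hM.1.eigenvalues) *
    (star hM.1.eigenvectorUnitary : Matrix (Fin N) (Fin N) ℂ)

lemma Matrix.PosSemidef.sqrt_eq_cfc {M : Matrix (Fin N) (Fin N) ℂ} (hM : M.PosSemidef) :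
    hM.sqrt = CFC.sqrt M := by
  rw [CFC.sqrt_eq_cfc, cfc_nnreal_eq_real _ M, hM.1.cfc_eq]
  simp only [Matrix.PosSemidef.sqrt, IsHermitian.cfc, Unitary.conjStarAlgAut_apply]
  congr 3
  funext i
  simp [hM.eigenvalues_nonneg i]

lemma Matrix.PosSemidef.sqrt_mul_self {M : Matrix (Fin N) (Fin N) ℂ} (hM : M.PosSemidef) :
    hM.sqrt * hM.sqrt = M := by
  rw [hM.sqrt_eq_cfc]; exact CFC.sqrt_mul_sqrt_self M hM.nonneg

lemma Matrix.PosSemidef.posSemidef_sqrt {M : Matrix (Fin N) (Fin N) ℂ} (hM : M.PosSemidef) :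
    hM.sqrt.PosSemidef := by
  rw [hM.sqrt_eq_cfc]; exact (CFC.sqrt_nonneg M).posSemidef

lemma Matrix.PosSemidef.eq_sqrt_of_sq_eq {A B : Matrix (Fin N) (Fin N) ℂ} (hA : A.PosSemidef)
    (hB : B.PosSemidef) (h : A ^ 2 = B) : A = hB.sqrt := by
  rw [hB.sqrt_eq_cfc]
  exact (CFC.sqrt_unique (by rw [← h, pow_two]) hA.nonneg).symm

end sqrtPort

lemma aux_trace_sqrt {M : Matrix (Fin N) (Fin N) ℂ} (hM : M.PosSemidef) :
    hM.sqrt.trace = ∑ i, (Real.sqrt (hM.1.eigenvalues i) : ℂ) := by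
  rw [Matrix.PosSemidef.sqrt, Matrix.trace_mul_cycle]
  have hu : (star hM.1.eigenvectorUnitary : Matrix (Fin N) (Fin N) ℂ) *
      (hM.1.eigenvectorUnitary : Matrix (Fin N) (Fin N) ℂ) = 1 := by
    simpa using hM.1.eigenvectorUnitary.2.1
  rw [hu, Matrix.one_mul, Matrix.trace_diagonal]
  rfl

lemma aux_traceNorm_psd {M : Matrix (Fin N) (Fin N) ℂ} (hM : M.PosSemidef) :
    (traceNorm M : ℂ) = M.trace := by
  have h := Matrix.posSemidef_conjTranspose_mul_self M
  have hMs : M = h.sqrt := hM.eq_sqrt_of_sq_eq h (by rw [pow_two, hM.1.eq])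
  rw [traceNorm]
  push_cast
  rw [← aux_trace_sqrt h, ← hMs]

lemma aux_trace_nonneg {M : Matrix (Fin N) (Fin N) ℂ} (hM : M.PosSemidef) :
    0 ≤ M.trace := by
  rw [Matrix.trace]
  refine Finset.sum_nonneg fun i _ => ?_
  have := hM.diag_nonneg (i := i)
  simpa [Matrix.diag] using this

lemma aux_trace_mul_nonneg {P M : Matrix (Fin N) (Fin N) ℂ} (hP : P.PosSemidef)
    (hM : M.PosSemidef) : 0 ≤ (P * M).trace := by
  have h1 : P * M = hP.sqrt * (hP.sqrt * M) := by
    rw [← Matrix.mul_assoc, hP.sqrt_mul_self]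
  rw [h1, Matrix.trace_mul_comm]
  refine aux_trace_nonneg ?_
  have := hM.mul_mul_conjTranspose_same hP.sqrt
  rwa [hP.posSemidef_sqrt.1.eq] at this

lemma aux_loewner {M : Matrix (Fin N) (Fin N) ℂ} (hM : M.IsHermitian) :
    (((specNorm M : ℂ)) • (1 : Matrix (Fin N) (Fin N) ℂ) - M).PosSemidef := by
  set T := Matrix.toEuclideanCLM (𝕜 := ℂ) M with hT
  have hTsa : _root_.IsSelfAdjoint T := by
    show star T = T
    rw [hT, ← map_star, Matrix.star_eq_conjTranspose, hM.eq]
  refine Matrix.PosSemidef.of_dotProduct_mulVec_nonneg ?_ ?_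
  · refine Matrix.IsHermitian.sub ?_ hM
    simp [Matrix.IsHermitian, Matrix.conjTranspose_smul, Complex.conj_ofReal]
  · intro x
    set x' : EuclideanSpace ℂ (Fin N) := (WithLp.equiv 2 _).symm x with hx'
    have hdot : star x ⬝ᵥ M *ᵥ x = inner ℂ x' (T x') := by
      rw [hT, hx', Matrix.toEuclideanCLM_toLp, EuclideanSpace.inner_toLp_toLp, dotProduct_comm]
      rfl
    have hxx : star x ⬝ᵥ x = (‖x'‖ : ℂ) ^ 2 := by
      rw [dotProduct_comm, ← EuclideanSpace.inner_toLp_toLp]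
      change inner ℂ x' x' = _
      rw [inner_self_eq_norm_sq_to_K]
      norm_num
    have hreal : (starRingEnd ℂ) (inner ℂ x' (T x') : ℂ) = inner ℂ x' (T x') := by
      rw [inner_conj_symm, ← ContinuousLinearMap.adjoint_inner_left,
        ContinuousLinearMap.isSelfAdjoint_iff'.mp hTsa]
    have him : (inner ℂ x' (T x') : ℂ).im = 0 := by
      have h2 := congrArg Complex.im hreal
      simp only [Complex.conj_im] at h2
      linarith
    have hre : (inner ℂ x' (T x') : ℂ).re ≤ specNorm M * ‖x'‖ ^ 2 := by
      calc (inner ℂ x' (T x') : ℂ).re ≤ ‖(inner ℂ x' (T x') : ℂ)‖ := Complex.re_le_norm _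
        _ ≤ ‖x'‖ * ‖T x'‖ := norm_inner_le_norm _ _
        _ ≤ ‖x'‖ * (‖T‖ * ‖x'‖) := by
            gcongr; exact T.le_opNorm x'
        _ = specNorm M * ‖x'‖ ^ 2 := by rw [specNorm]; ring
    have expand : star x ⬝ᵥ ((((specNorm M : ℂ)) • (1 : Matrix (Fin N) (Fin N) ℂ) - M) *ᵥ x)
        = (specNorm M : ℂ) * ((‖x'‖ : ℂ) ^ 2) - inner ℂ x' (T x') := by
      rw [Matrix.sub_mulVec, dotProduct_sub, Matrix.smul_mulVec,
        Matrix.one_mulVec, dotProduct_smul, hdot, smul_eq_mul, hxx]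
    have hz : (inner ℂ x' (T x') : ℂ) = (((inner ℂ x' (T x') : ℂ).re : ℝ) : ℂ) :=
      Complex.ext (by simp) (by simpa using him)
    rw [expand, hz]
    have hcast : (specNorm M : ℂ) * ((‖x'‖ : ℂ)) ^ 2 - (((inner ℂ x' (T x') : ℂ).re : ℝ) : ℂ)
        = ((specNorm M * ‖x'‖ ^ 2 - (inner ℂ x' (T x') : ℂ).re : ℝ) : ℂ) := by
      push_cast; ring
    rw [hcast, Complex.zero_le_real]
    linarith

lemma aux_re_trace_mul_le {P M : Matrix (Fin N) (Fin N) ℂ} (hP : P.PosSemidef)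
    (hM : M.IsHermitian) :
    ((P * M).trace).re ≤ specNorm M * (P.trace).re := by
  have h := aux_trace_mul_nonneg hP (aux_loewner hM)
  rw [Matrix.mul_sub, Matrix.mul_smul, Matrix.mul_one, Matrix.trace_sub, Matrix.trace_smul] at h
  have h1 := (Complex.le_def.mp h).1
  simp only [Complex.zero_re, Complex.sub_re, smul_eq_mul, Complex.mul_re,
    Complex.ofReal_re, Complex.ofReal_im, zero_mul, sub_zero] at h1
  linarith

lemma aux_trace_conj (A D C : Matrix (Fin N) (Fin N) ℂ) :
    ((Aᴴ * D * A) * C).trace = (D * (A * C * Aᴴ)).trace := by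
  rw [show Aᴴ * D * A * C = Aᴴ * (D * (A * C)) by simp only [Matrix.mul_assoc],
    Matrix.trace_mul_comm]
  simp only [Matrix.mul_assoc]

lemma aux_traceNorm_nonneg (A : Matrix (Fin N) (Fin N) ℂ) : 0 ≤ traceNorm A :=
  Finset.sum_nonneg fun _ _ => Real.sqrt_nonneg _

theorem stmt5 {N : ℕ} (A B Q Qt : Matrix (Fin N) (Fin N) ℂ)
    (hQ : Q.IsHermitian) (hQt : Qt.PosDef)
    (U V W : Matrix (Fin N) (Fin N) ℂ)
    (hU : U = ((Real.sqrt 2 : ℂ))⁻¹ • (A - B + 1))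
    (hV : V = ((Real.sqrt 2 : ℂ))⁻¹ • (A + B + 1))
    (hW : W = B - 1)
    (F : Matrix (Fin N) (Fin N) ℂ → Matrix (Fin N) (Fin N) ℂ → Matrix (Fin N) (Fin N) ℂ)
    (hF : ∀ X Y, F X Y = Q + (Vᴴ * X * V + Wᴴ * X * W) - (Uᴴ * Y * U + Bᴴ * Y * B))
    (S : Matrix (Fin N) (Fin N) ℂ) (hS : S = (hQt.posSemidef.1.eigenvectorUnitary : Matrix (Fin N) (Fin N) ℂ) *
      diagonal ((↑) ∘ Real.sqrt ∘ hQt.posSemidef.1.eigenvalues) *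
      (star hQt.posSemidef.1.eigenvectorUnitary : Matrix (Fin N) (Fin N) ℂ))
    (δ : ℝ)
    (hδ : δ = 2 * max (specNorm (S⁻¹ * (V * Qt * Vᴴ + W * Qt * Wᴴ) * S⁻¹))
                      (specNorm (S⁻¹ * (U * Qt * Uᴴ + B * Qt * Bᴴ) * S⁻¹)))
    (X Y J K : Matrix (Fin N) (Fin N) ℂ)
    (hX : X.IsHermitian) (hY : Y.IsHermitian) (hJ : J.IsHermitian) (hK : K.IsHermitian)
    (hXJ : (X - J).PosSemidef) (hYK : (K - Y).PosSemidef) :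
    traceNorm (S * (F X Y - F J K) * S) ≤
      δ / 2 * (traceNorm (S * (X - J) * S) + traceNorm (S * (K - Y) * S)) := by
  have hSH : S.IsHermitian := hS ▸ hQt.posSemidef.posSemidef_sqrt.1
  have hss : S * S = Qt := by rw [hS]; exact hQt.posSemidef.sqrt_mul_self
  have hdet : IsUnit S.det := by
    have hd : S.det * S.det = Qt.det := by rw [← Matrix.det_mul, hss]
    have hq : Qt.det ≠ 0 := hQt.det_pos.ne'
    rw [isUnit_iff_ne_zero]
    intro h0
    rw [h0, mul_zero] at hd
    exact hq hd.symm
  have hSiH : S⁻¹.IsHermitian := hSH.inv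
  set D := X - J with hD
  set E := K - Y with hE
  set M₁ := V * Qt * Vᴴ + W * Qt * Wᴴ with hM₁
  set M₂ := U * Qt * Uᴴ + B * Qt * Bᴴ with hM₂
  have hFd : F X Y - F J K = (Vᴴ * D * V + Wᴴ * D * W) + (Uᴴ * E * U + Bᴴ * E * B) := by
    rw [hF, hF, hD, hE]
    noncomm_ring
  have hM0 : (F X Y - F J K).PosSemidef := by
    rw [hFd]
    exact ((hXJ.conjTranspose_mul_mul_same V).add (hXJ.conjTranspose_mul_mul_same W)).add
      ((hYK.conjTranspose_mul_mul_same U).add (hYK.conjTranspose_mul_mul_same B))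
  have tnorm_eq : ∀ (P : Matrix (Fin N) (Fin N) ℂ), P.PosSemidef →
      (traceNorm (S * P * S) : ℂ) = (P * Qt).trace := by
    intro P hP
    have hpsd : (S * P * S).PosSemidef := by
      have := hP.mul_mul_conjTranspose_same S
      rwa [hSH.eq] at this
    rw [aux_traceNorm_psd hpsd, Matrix.trace_mul_cycle, hss, Matrix.trace_mul_comm]
  have key : ∀ (P M : Matrix (Fin N) (Fin N) ℂ), P.PosSemidef → M.IsHermitian →
      ((P * M).trace).re ≤ specNorm (S⁻¹ * M * S⁻¹) * ((P * Qt).trace).re := by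
    intro P M hP hM
    have hpsd : (S * P * S).PosSemidef := by
      have := hP.mul_mul_conjTranspose_same S
      rwa [hSH.eq] at this
    have heq : (P * M).trace = ((S * P * S) * (S⁻¹ * M * S⁻¹)).trace := by
      have h1 : (S * P * S) * (S⁻¹ * M * S⁻¹) = S * (P * M) * S⁻¹ := by
        simp only [Matrix.mul_assoc]
        rw [Matrix.mul_nonsing_inv_cancel_left _ _ hdet]
      rw [h1, Matrix.trace_mul_cycle, ← Matrix.mul_assoc, Matrix.nonsing_inv_mul _ hdet,
        Matrix.one_mul]
    have hherm : (S⁻¹ * M * S⁻¹).IsHermitian := by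
      have := Matrix.isHermitian_conjTranspose_mul_mul S⁻¹ hM
      rwa [hSiH.eq] at this
    have htr : ((P * Qt).trace) = ((S * P * S).trace) := by
      rw [Matrix.trace_mul_cycle, hss, Matrix.trace_mul_comm]
    rw [heq, htr]
    exact aux_re_trace_mul_le hpsd hherm
  have hM₁H : M₁.IsHermitian :=
    (Matrix.isHermitian_mul_mul_conjTranspose V hQt.1).add
      (Matrix.isHermitian_mul_mul_conjTranspose W hQt.1)
  have hM₂H : M₂.IsHermitian :=
    (Matrix.isHermitian_mul_mul_conjTranspose U hQt.1).add
      (Matrix.isHermitian_mul_mul_conjTranspose B hQt.1)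
  have hsplit : ((F X Y - F J K) * Qt).trace = (D * M₁).trace + (E * M₂).trace := by
    rw [hFd, Matrix.add_mul, Matrix.add_mul, Matrix.add_mul, Matrix.trace_add,
      Matrix.trace_add, Matrix.trace_add, aux_trace_conj, aux_trace_conj, aux_trace_conj,
      aux_trace_conj, hM₁, hM₂, Matrix.mul_add, Matrix.mul_add, Matrix.trace_add,
      Matrix.trace_add]
  -- real versions
  have hLHS : traceNorm (S * (F X Y - F J K) * S)
      = ((D * M₁).trace).re + ((E * M₂).trace).re := by
    have := congrArg Complex.re (tnorm_eq _ hM0)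
    rw [Complex.ofReal_re] at this
    rw [this, hsplit, Complex.add_re]
  have hTD : (traceNorm (S * D * S) : ℝ) = ((D * Qt).trace).re := by
    have := congrArg Complex.re (tnorm_eq _ hXJ)
    rwa [Complex.ofReal_re] at this
  have hTE : (traceNorm (S * E * S) : ℝ) = ((E * Qt).trace).re := by
    have := congrArg Complex.re (tnorm_eq _ hYK)
    rwa [Complex.ofReal_re] at this
  have h1 := key D M₁ hXJ hM₁H
  have h2 := key E M₂ hYK hM₂H
  set c₁ := specNorm (S⁻¹ * M₁ * S⁻¹) with hc₁
  set c₂ := specNorm (S⁻¹ * M₂ * S⁻¹) with hc₂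
  have hmax : δ / 2 = max c₁ c₂ := by rw [hδ]; ring
  rw [hLHS, hmax]
  have hd1 : 0 ≤ ((D * Qt).trace).re := hTD ▸ aux_traceNorm_nonneg _
  have hd2 : 0 ≤ ((E * Qt).trace).re := hTE ▸ aux_traceNorm_nonneg _
  have e1 : c₁ ≤ max c₁ c₂ := le_max_left _ _
  have e2 : c₂ ≤ max c₁ c₂ := le_max_right _ _
  calc ((D * M₁).trace).re + ((E * M₂).trace).re
      ≤ c₁ * ((D * Qt).trace).re + c₂ * ((E * Qt).trace).re := add_le_add h1 h2
    _ ≤ max c₁ c₂ * ((D * Qt).trace).re + max c₁ c₂ * ((E * Qt).trace).re := by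
        gcongr
    _ = max c₁ c₂ * (traceNorm (S * D * S) + traceNorm (S * E * S)) := by
        rw [hTD, hTE]; ring
end

section
/- Suppose there exist Hermitian positive definite N×N matrices Q̃ and M such that: (a) 2(U Q̃ U* + B Q̃ B*) < Q̃; (b) 2(V Q̃ V* + W Q̃ W*) < Q̃; (c) U*MU + B*MB < M − (V*MV + W*MW); and (d) U*MU + B*MB < Q < M − (V*MV + W*MW), where U = (A − B + I)/√2, V = (A + B + I)/√2, W = B − I. Then the equation A*XB + B*XA = −Q has exactly one Hermitian positive definite solution X̂. -/
open Matrix Filter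
open scoped Topology
open scoped ComplexOrder

section Aux

variable {N : ℕ}

private lemma psd_diag_nonneg {P : Matrix (Fin N) (Fin N) ℂ} (hP : P.PosSemidef) (i : Fin N) :
    0 ≤ P i i := by
  have := hP.dotProduct_mulVec_nonneg (Pi.single i 1)
  simpa [Matrix.mulVec_single, dotProduct, Pi.single_apply, Finset.sum_ite_eq'] using this

private lemma psd_trace_re_nonneg {P : Matrix (Fin N) (Fin N) ℂ} (hP : P.PosSemidef) :
    0 ≤ P.trace.re := by
  rw [Matrix.trace, Complex.re_sum]
  exact Finset.sum_nonneg fun i _ => (Complex.nonneg_iff.mp (psd_diag_nonneg hP i)).1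

private lemma psd_trace_mul_re_nonneg {P R : Matrix (Fin N) (Fin N) ℂ}
    (hP : P.PosSemidef) (hR : R.PosSemidef) : 0 ≤ ((P * R).trace).re := by
  obtain ⟨C, rfl⟩ : ∃ C : Matrix (Fin N) (Fin N) ℂ, R = Cᴴ * C := by
    open scoped MatrixOrder in
    have h0 : (0 : Matrix (Fin N) (Fin N) ℂ) ≤ R := hR.nonneg
    refine ⟨CFC.sqrt R, ?_⟩
    rw [← Matrix.star_eq_conjTranspose, (CFC.sqrt_nonneg R).isSelfAdjoint.star_eq,
      CFC.sqrt_mul_sqrt_self R h0]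
  have h1 : P * (Cᴴ * C) = (P * Cᴴ) * C := by rw [mul_assoc]
  rw [h1, Matrix.trace_mul_comm]
  have : C * (P * Cᴴ) = C * P * Cᴴ := by rw [mul_assoc]
  rw [this]
  exact psd_trace_re_nonneg (hP.mul_mul_conjTranspose_same C)

private lemma psd_entry_le_trace {P : Matrix (Fin N) (Fin N) ℂ} (hP : P.PosSemidef)
    (i j : Fin N) : ‖P i j‖ ≤ P.trace.re := by
  have hdre : ∀ k, 0 ≤ (P k k).re := fun k => (Complex.nonneg_iff.mp (psd_diag_nonneg hP k)).1
  have htr : ∀ k, (P k k).re ≤ P.trace.re := by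
    intro k
    rw [Matrix.trace, Complex.re_sum]
    exact Finset.single_le_sum (fun l _ => hdre l) (Finset.mem_univ k)
  by_cases hij : i = j
  · subst hij
    have him : (P i i).im = 0 := ((Complex.nonneg_iff.mp (psd_diag_nonneg hP i)).2).symm
    have : ‖P i i‖ = (P i i).re := by
      have : P i i = ((P i i).re : ℂ) := Complex.ext rfl (by simp [him])
      rw [this]
      simp [abs_of_nonneg (hdre i)]
    rw [this]; exact htr i
  · by_cases h0 : P i j = 0
    · rw [h0]; simpa using le_trans (hdre i) (htr i)
    · set z : ℂ := -(‖P i j‖ : ℂ) / P i j with hz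
      have hzPij : z * P i j = -(‖P i j‖ : ℂ) := by rw [hz, div_mul_cancel₀ _ h0]
      have hzz : starRingEnd ℂ z * z = 1 := by
        have : ‖z‖ = 1 := by
          rw [hz, norm_div, norm_neg, Complex.norm_real, norm_norm]
          rw [div_self (by simpa using h0)]
        rw [mul_comm, Complex.mul_conj, Complex.normSq_eq_norm_sq, this]
        norm_num
      have hexp : ∀ w : ℂ, star (Pi.single i 1 + Pi.single j w) ⬝ᵥ
          (P *ᵥ (Pi.single i 1 + Pi.single j w)) =
          P i i + starRingEnd ℂ w * w * P j j + (w * P i j + starRingEnd ℂ w * P j i) := by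
        intro w
        simp only [star_add, ← Pi.single_star, Matrix.mulVec_add, dotProduct_add,
          add_dotProduct, Matrix.mulVec_single, single_dotProduct,
          RCLike.star_def, _root_.map_one, Pi.smul_apply, MulOpposite.smul_eq_mul_unop,
          MulOpposite.unop_op, Matrix.col_apply]
        ring
      have hji : P j i = starRingEnd ℂ (P i j) := by
        conv_lhs => rw [← hP.1]
        simp [Matrix.conjTranspose_apply, RCLike.star_def]
      have hx := hP.dotProduct_mulVec_nonneg (Pi.single i 1 + Pi.single j z)
      rw [hexp z, hzz, hji, ← _root_.map_mul, hzPij] at hx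
      have hxre := (Complex.nonneg_iff.mp hx).1
      simp only [one_mul, Complex.add_re, Complex.neg_re, Complex.ofReal_re,
        Complex.conj_re] at hxre
      have hpair : (P i i).re + (P j j).re ≤ P.trace.re := by
        rw [Matrix.trace, Complex.re_sum]
        have := Finset.sum_le_sum_of_subset_of_nonneg
          (Finset.subset_univ ({i, j} : Finset (Fin N)))
          (fun k _ _ => hdre k)
        rwa [Finset.sum_pair hij] at this
      have hnn := norm_nonneg (P i j)
      linarith

private lemma psd_smul {P : Matrix (Fin N) (Fin N) ℂ} (hP : P.PosSemidef) {r : ℝ} (hr : 0 ≤ r) :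
    ((r : ℂ) • P).PosSemidef := by
  refine Matrix.PosSemidef.of_dotProduct_mulVec_nonneg ?_ ?_
  · rw [Matrix.IsHermitian, Matrix.conjTranspose_smul, RCLike.star_def, Complex.conj_ofReal, hP.1]
  · intro x
    rw [Matrix.smul_mulVec, dotProduct_smul]
    rw [smul_eq_mul]
    exact mul_nonneg (by rwa [Complex.zero_le_real]) (hP.dotProduct_mulVec_nonneg x)

private lemma unitary_conj_psd {D Un : Matrix (Fin N) (Fin N) ℂ} (hD : D.PosSemidef) :
    (Un * D * star Un).PosSemidef := hD.mul_mul_conjTranspose_same Un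

private lemma herm_sub_smul_psd {H : Matrix (Fin N) (Fin N) ℂ} (hH : H.IsHermitian)
    (δ : ℝ) (h : ∀ i, δ ≤ hH.eigenvalues i) : (H - (δ : ℂ) • 1).PosSemidef := by
  set Un : Matrix (Fin N) (Fin N) ℂ := (hH.eigenvectorUnitary : Matrix (Fin N) (Fin N) ℂ) with hUn
  have h1 : Un * star Un = 1 := Matrix.mem_unitaryGroup_iff.mp hH.eigenvectorUnitary.2
  have key : H - (δ : ℂ) • 1 =
      Un * (Matrix.diagonal (RCLike.ofReal ∘ hH.eigenvalues) - (δ : ℂ) • 1) * star Un := by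
    rw [Matrix.mul_sub, Matrix.sub_mul]
    conv_lhs => rw [hH.spectral_theorem]
    simp only [Unitary.conjStarAlgAut_apply, Unitary.coe_star]
    congr 1
    rw [Matrix.mul_smul, mul_one, Matrix.smul_mul, h1]
  have hdiag : Matrix.diagonal (RCLike.ofReal ∘ hH.eigenvalues) - (δ : ℂ) • 1 =
      Matrix.diagonal (fun i => ((hH.eigenvalues i - δ : ℝ) : ℂ)) := by
    rw [Matrix.smul_one_eq_diagonal, Matrix.diagonal_sub]
    funext i; push_cast; simp
  rw [key, hdiag]
  exact unitary_conj_psd (Matrix.posSemidef_diagonal_iff.mpr fun i => by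
    rw [Complex.zero_le_real]; linarith [h i])

private lemma smul_sub_herm_psd {H : Matrix (Fin N) (Fin N) ℂ} (hH : H.IsHermitian)
    (β : ℝ) (h : ∀ i, hH.eigenvalues i ≤ β) : ((β : ℂ) • 1 - H).PosSemidef := by
  set Un : Matrix (Fin N) (Fin N) ℂ := (hH.eigenvectorUnitary : Matrix (Fin N) (Fin N) ℂ) with hUn
  have h1 : Un * star Un = 1 := Matrix.mem_unitaryGroup_iff.mp hH.eigenvectorUnitary.2
  have key : (β : ℂ) • 1 - H =
      Un * ((β : ℂ) • 1 - Matrix.diagonal (RCLike.ofReal ∘ hH.eigenvalues)) * star Un := by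
    rw [Matrix.mul_sub, Matrix.sub_mul]
    conv_lhs => rw [hH.spectral_theorem]
    simp only [Unitary.conjStarAlgAut_apply, Unitary.coe_star]
    congr 2
    rw [Matrix.mul_smul, mul_one, Matrix.smul_mul, h1]
  have hdiag : (β : ℂ) • 1 - Matrix.diagonal (RCLike.ofReal ∘ hH.eigenvalues) =
      Matrix.diagonal (fun i => ((β - hH.eigenvalues i : ℝ) : ℂ)) := by
    rw [Matrix.smul_one_eq_diagonal, Matrix.diagonal_sub]
    funext i; push_cast; simp
  rw [key, hdiag]
  exact unitary_conj_psd (Matrix.posSemidef_diagonal_iff.mpr fun i => by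
    rw [Complex.zero_le_real]; linarith [h i])

private lemma psd_of_fin_zero (hN : N = 0) (P : Matrix (Fin N) (Fin N) ℂ) : P.PosSemidef := by
  subst hN
  exact ⟨by ext i j; exact i.elim0, fun x => by simp [Finsupp.sum, Subsingleton.elim x.support ∅]⟩

private lemma exists_lower {Qt : Matrix (Fin N) (Fin N) ℂ} (hP : Qt.PosDef) :
    ∃ δ : ℝ, 0 < δ ∧ (Qt - (δ : ℂ) • 1).PosSemidef := by
  rcases Nat.eq_zero_or_pos N with h0 | hpos
  · exact ⟨1, one_pos, psd_of_fin_zero h0 _⟩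
  · haveI : Nonempty (Fin N) := ⟨⟨0, hpos⟩⟩
    refine ⟨Finset.univ.inf' Finset.univ_nonempty hP.1.eigenvalues, ?_, ?_⟩
    · rw [Finset.lt_inf'_iff]
      exact fun i _ => hP.eigenvalues_pos i
    · exact herm_sub_smul_psd hP.1 _ (fun i => Finset.inf'_le _ (Finset.mem_univ i))

private lemma exists_upper {H : Matrix (Fin N) (Fin N) ℂ} (hH : H.IsHermitian) :
    ∃ β : ℝ, 0 < β ∧ ((β : ℂ) • 1 - H).PosSemidef := by
  rcases Nat.eq_zero_or_pos N with h0 | hpos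
  · exact ⟨1, one_pos, psd_of_fin_zero h0 _⟩
  · haveI : Nonempty (Fin N) := ⟨⟨0, hpos⟩⟩
    refine ⟨max (Finset.univ.sup' Finset.univ_nonempty hH.eigenvalues) 1,
      lt_of_lt_of_le one_pos (le_max_right _ _), ?_⟩
    exact smul_sub_herm_psd hH _ (fun i =>
      le_trans (Finset.le_sup' _ (Finset.mem_univ i)) (le_max_left _ _))

private lemma key_id {A B U V W : Matrix (Fin N) (Fin N) ℂ}
    (hU : U = ((Real.sqrt 2 : ℂ))⁻¹ • (A - B + 1))
    (hV : V = ((Real.sqrt 2 : ℂ))⁻¹ • (A + B + 1))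
    (hW : W = B - 1) (X : Matrix (Fin N) (Fin N) ℂ) :
    Vᴴ * X * V + Wᴴ * X * W - (Uᴴ * X * U + Bᴴ * X * B) =
      Aᴴ * X * B + Bᴴ * X * A + X := by
  have hc : starRingEnd ℂ ((Real.sqrt 2 : ℂ))⁻¹ = ((Real.sqrt 2 : ℂ))⁻¹ := by
    rw [map_inv₀, Complex.conj_ofReal]
  have hcc : ((Real.sqrt 2 : ℂ))⁻¹ * ((Real.sqrt 2 : ℂ))⁻¹ = (2 : ℂ)⁻¹ := by
    rw [← mul_inv, ← Complex.ofReal_mul, Real.mul_self_sqrt (by norm_num)]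
    norm_num
  subst hU hV hW
  set c : ℂ := ((Real.sqrt 2 : ℂ))⁻¹ with hcdef
  have hsmul : ∀ P R : Matrix (Fin N) (Fin N) ℂ,
      (c • P)ᴴ * X * (c • R) = (2:ℂ)⁻¹ • (Pᴴ * X * R) := by
    intro P R
    rw [Matrix.conjTranspose_smul, Matrix.smul_mul, Matrix.smul_mul, Matrix.mul_smul,
      smul_smul, RCLike.star_def, hc, hcc]
  rw [hsmul, hsmul]
  simp only [Matrix.conjTranspose_add, Matrix.conjTranspose_sub, Matrix.conjTranspose_one]
  have h12 : (Aᴴ + Bᴴ + 1) * X * (A + B + 1) - (Aᴴ - Bᴴ + 1) * X * (A - B + 1) =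
      (Aᴴ * X * B + Bᴴ * X * A + Bᴴ * X + X * B) +
      (Aᴴ * X * B + Bᴴ * X * A + Bᴴ * X + X * B) := by
    noncomm_ring
  have hWp : (Bᴴ - 1) * X * (B - 1) - Bᴴ * X * B = -(Bᴴ * X) - X * B + X := by
    noncomm_ring
  have hhalf : (2:ℂ)⁻¹ • ((Aᴴ * X * B + Bᴴ * X * A + Bᴴ * X + X * B) +
      (Aᴴ * X * B + Bᴴ * X * A + Bᴴ * X + X * B)) =
      Aᴴ * X * B + Bᴴ * X * A + Bᴴ * X + X * B := by
    rw [← two_smul ℂ, smul_smul]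
    norm_num
  calc (2:ℂ)⁻¹ • ((Aᴴ + Bᴴ + 1) * X * (A + B + 1)) + (Bᴴ - 1) * X * (B - 1) -
        ((2:ℂ)⁻¹ • ((Aᴴ - Bᴴ + 1) * X * (A - B + 1)) + Bᴴ * X * B)
      = (2:ℂ)⁻¹ • ((Aᴴ + Bᴴ + 1) * X * (A + B + 1) - (Aᴴ - Bᴴ + 1) * X * (A - B + 1)) +
        ((Bᴴ - 1) * X * (B - 1) - Bᴴ * X * B) := by rw [smul_sub]; abel
    _ = Aᴴ * X * B + Bᴴ * X * A + X := by rw [h12, hWp, hhalf]; noncomm_ring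

private lemma psd_limit {Z : ℕ → Matrix (Fin N) (Fin N) ℂ} {Zl : Matrix (Fin N) (Fin N) ℂ}
    (hZ : ∀ n, (Z n).PosSemidef) (h : Tendsto Z atTop (𝓝 Zl)) : Zl.PosSemidef := by
  have hentry : ∀ i j, Tendsto (fun n => Z n i j) atTop (𝓝 (Zl i j)) := by
    intro i j
    have h1 := tendsto_pi_nhds.mp h i
    exact tendsto_pi_nhds.mp h1 j
  refine Matrix.PosSemidef.of_dotProduct_mulVec_nonneg ?_ ?_
  · ext i j
    rw [Matrix.conjTranspose_apply]
    have h1 : Tendsto (fun n => star (Z n j i)) atTop (𝓝 (star (Zl j i))) :=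
      (hentry j i).star
    have h2 : (fun n => star (Z n j i)) = fun n => Z n i j := by
      funext n
      rw [← Matrix.conjTranspose_apply, (hZ n).1]
    rw [h2] at h1
    exact tendsto_nhds_unique h1 (hentry i j)
  · intro v
    have hform : ∀ (Zm : Matrix (Fin N) (Fin N) ℂ), star v ⬝ᵥ (Zm *ᵥ v) =
        ∑ i, ∑ j, star (v i) * (Zm i j * v j) := by
      intro Zm
      simp [dotProduct, Matrix.mulVec, Finset.mul_sum]
    have hq : Tendsto (fun n => star v ⬝ᵥ (Z n *ᵥ v)) atTop (𝓝 (star v ⬝ᵥ (Zl *ᵥ v))) := by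
      simp only [hform]
      exact tendsto_finset_sum _ fun i _ => tendsto_finset_sum _ fun j _ =>
        tendsto_const_nhds.mul ((hentry i j).mul tendsto_const_nhds)
    have hre : Tendsto (fun n => (star v ⬝ᵥ (Z n *ᵥ v)).re) atTop
        (𝓝 ((star v ⬝ᵥ (Zl *ᵥ v)).re)) := (Complex.continuous_re.tendsto _).comp hq
    have him : Tendsto (fun n => (star v ⬝ᵥ (Z n *ᵥ v)).im) atTop
        (𝓝 ((star v ⬝ᵥ (Zl *ᵥ v)).im)) := (Complex.continuous_im.tendsto _).comp hq
    rw [Complex.nonneg_iff]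
    constructor
    · exact ge_of_tendsto' hre fun n => (Complex.nonneg_iff.mp ((hZ n).dotProduct_mulVec_nonneg v)).1 |>.trans_eq rfl
    · have : (fun n => (star v ⬝ᵥ (Z n *ᵥ v)).im) = fun _ => (0:ℝ) := by
        funext n
        exact ((Complex.nonneg_iff.mp ((hZ n).dotProduct_mulVec_nonneg v)).2).symm
      rw [this] at him
      exact tendsto_nhds_unique tendsto_const_nhds him

end Aux
section Ops
variable {N : ℕ}

private noncomputable def opP (V W X : Matrix (Fin N) (Fin N) ℂ) : Matrix (Fin N) (Fin N) ℂ :=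
  Vᴴ * X * V + Wᴴ * X * W

private lemma opP_sub (V W X Y : Matrix (Fin N) (Fin N) ℂ) :
    opP V W (X - Y) = opP V W X - opP V W Y := by
  simp only [opP, Matrix.mul_sub, Matrix.sub_mul]
  abel

private lemma opP_add (V W X Y : Matrix (Fin N) (Fin N) ℂ) :
    opP V W (X + Y) = opP V W X + opP V W Y := by
  simp only [opP, Matrix.mul_add, Matrix.add_mul]
  abel

private lemma opP_psd {X : Matrix (Fin N) (Fin N) ℂ} (V W : Matrix (Fin N) (Fin N) ℂ)
    (hX : X.PosSemidef) : (opP V W X).PosSemidef :=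
  (hX.conjTranspose_mul_mul_same V).add (hX.conjTranspose_mul_mul_same W)

private lemma opP_zero (V W : Matrix (Fin N) (Fin N) ℂ) : opP V W 0 = 0 := by
  simp [opP]

private noncomputable def opK (V W U B X : Matrix (Fin N) (Fin N) ℂ) : Matrix (Fin N) (Fin N) ℂ :=
  opP V W X + opP U B X

private lemma opK_psd {X : Matrix (Fin N) (Fin N) ℂ} (V W U B : Matrix (Fin N) (Fin N) ℂ)
    (hX : X.PosSemidef) : (opK V W U B X).PosSemidef :=
  (opP_psd V W hX).add (opP_psd U B hX)

private noncomputable def seqd (V W U B M : Matrix (Fin N) (Fin N) ℂ) (n : ℕ) :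
    Matrix (Fin N) (Fin N) ℂ := (opK V W U B)^[n] M

private noncomputable def seqx (V W U B Q M : Matrix (Fin N) (Fin N) ℂ) :
    ℕ → Matrix (Fin N) (Fin N) ℂ
  | 0 => 0
  | n+1 => Q + opP V W (seqx V W U B Q M n)
      - opP U B (seqx V W U B Q M n + seqd V W U B M n)

private noncomputable def seqy (V W U B Q M : Matrix (Fin N) (Fin N) ℂ)
    (n : ℕ) : Matrix (Fin N) (Fin N) ℂ :=
  seqx V W U B Q M n + seqd V W U B M n

private lemma seqd_succ (V W U B M : Matrix (Fin N) (Fin N) ℂ) (n : ℕ) :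
    seqd V W U B M (n+1) = opK V W U B (seqd V W U B M n) := by
  simp only [seqd, Function.iterate_succ_apply']

private lemma seqy_succ (V W U B Q M : Matrix (Fin N) (Fin N) ℂ) (n : ℕ) :
    seqy V W U B Q M (n+1) = Q + opP V W (seqy V W U B Q M n)
      - opP U B (seqx V W U B Q M n) := by
  simp only [seqy, seqx, seqd_succ, opK, opP_add]
  abel

end Ops
section Contr
variable {N : ℕ}

private lemma contraction (V W U B Qt : Matrix (Fin N) (Fin N) ℂ) (hQt : Qt.PosDef)
    (ha : (Qt - 2 • (U * Qt * Uᴴ + B * Qt * Bᴴ)).PosDef)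
    (hb : (Qt - 2 • (V * Qt * Vᴴ + W * Qt * Wᴴ)).PosDef) :
    ∃ c : ℝ, 0 ≤ c ∧ c < 1 ∧ ∀ X : Matrix (Fin N) (Fin N) ℂ, X.PosSemidef →
      ((opK V W U B X * Qt).trace).re ≤ c * ((X * Qt).trace).re := by
  obtain ⟨δ, hδ, hδpsd⟩ := exists_lower (ha.add hb)
  obtain ⟨β, hβ, hβpsd⟩ := exists_upper hQt.1
  set S : Matrix (Fin N) (Fin N) ℂ :=
    V * Qt * Vᴴ + W * Qt * Wᴴ + (U * Qt * Uᴴ + B * Qt * Bᴴ) with hS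
  have hT : (((2*β - δ : ℝ) : ℂ) • Qt - ((2*β : ℝ) : ℂ) • S).PosSemidef := by
    have heq : ((2*β - δ : ℝ) : ℂ) • Qt - ((2*β : ℝ) : ℂ) • S =
        (β : ℂ) • (((Qt - 2 • (U * Qt * Uᴴ + B * Qt * Bᴴ)) +
          (Qt - 2 • (V * Qt * Vᴴ + W * Qt * Wᴴ))) - (δ : ℂ) • 1)
        + (δ : ℂ) • ((β : ℂ) • 1 - Qt) := by
      have h2 : ∀ Z : Matrix (Fin N) (Fin N) ℂ, (2 : ℕ) • Z = (2 : ℂ) • Z := by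
        intro Z
        rw [← Nat.cast_smul_eq_nsmul ℂ 2 Z]
        norm_num
      simp only [hS, h2]
      push_cast
      module
    rw [heq]
    exact (psd_smul hδpsd hβ.le).add (psd_smul hβpsd hδ.le)
  refine ⟨max ((2*β - δ)/(2*β)) 0, le_max_right _ _, ?_, ?_⟩
  · apply max_lt _ one_pos
    rw [div_lt_one (by linarith)]
    linarith
  · intro X hX
    have htr : (opK V W U B X * Qt).trace = (X * S).trace := by
      have cyc : ∀ G R : Matrix (Fin N) (Fin N) ℂ,
          ((Gᴴ * X * G) * R).trace = (X * (G * R * Gᴴ)).trace := by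
        intro G R
        rw [show (Gᴴ * X * G) * R = Gᴴ * (X * G * R) by noncomm_ring]
        rw [Matrix.trace_mul_comm]
        rw [show (X * G * R) * Gᴴ = X * (G * R * Gᴴ) by noncomm_ring]
      simp only [opK, opP, hS, Matrix.add_mul, Matrix.mul_add, Matrix.trace_add]
      rw [cyc V Qt, cyc W Qt, cyc U Qt, cyc B Qt]
    have h0 : 0 ≤ ((X * (((2*β - δ : ℝ) : ℂ) • Qt - ((2*β : ℝ) : ℂ) • S)).trace).re :=
      psd_trace_mul_re_nonneg hX hT
    rw [Matrix.mul_sub, Matrix.mul_smul, Matrix.mul_smul, Matrix.trace_sub,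
      Matrix.trace_smul, Matrix.trace_smul] at h0
    simp only [Complex.sub_re, smul_eq_mul, Complex.mul_re, Complex.ofReal_re,
      Complex.ofReal_im, zero_mul, sub_zero] at h0
    have hXQt : 0 ≤ ((X * Qt).trace).re := psd_trace_mul_re_nonneg hX hQt.posSemidef
    have hre : ((opK V W U B X * Qt).trace).re = ((X * S).trace).re := by rw [htr]
    rw [hre]
    have hdiv : ((X * S).trace).re ≤ ((2*β - δ)/(2*β)) * ((X * Qt).trace).re := by
      rw [div_mul_eq_mul_div, le_div_iff₀ (by linarith)]
      nlinarith
    calc ((X * S).trace).re ≤ ((2*β - δ)/(2*β)) * ((X * Qt).trace).re := hdiv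
      _ ≤ max ((2*β - δ)/(2*β)) 0 * ((X * Qt).trace).re :=
          mul_le_mul_of_nonneg_right (le_max_left _ _) hXQt

end Contr
theorem stmt7 {N : ℕ} (A B Q Qt M : Matrix (Fin N) (Fin N) ℂ)
    (hQ : Q.PosDef) (hQt : Qt.PosDef) (hM : M.PosDef)
    (U V W : Matrix (Fin N) (Fin N) ℂ)
    (hU : U = ((Real.sqrt 2 : ℂ))⁻¹ • (A - B + 1))
    (hV : V = ((Real.sqrt 2 : ℂ))⁻¹ • (A + B + 1))
    (hW : W = B - 1)
    (ha : (Qt - 2 • (U * Qt * Uᴴ + B * Qt * Bᴴ)).PosDef)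
    (hb : (Qt - 2 • (V * Qt * Vᴴ + W * Qt * Wᴴ)).PosDef)
    (hc : ((M - (Vᴴ * M * V + Wᴴ * M * W)) - (Uᴴ * M * U + Bᴴ * M * B)).PosDef)
    (hd1 : (Q - (Uᴴ * M * U + Bᴴ * M * B)).PosDef)
    (hd2 : ((M - (Vᴴ * M * V + Wᴴ * M * W)) - Q).PosDef) :
    ∃! X : Matrix (Fin N) (Fin N) ℂ, X.PosDef ∧ Aᴴ * X * B + Bᴴ * X * A = -Q := by
  obtain ⟨c, hc0, hc1, hstep⟩ := contraction V W U B Qt hQt ha hb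
  obtain ⟨ε, hε, hεpsd⟩ := exists_lower hQt
  have htrle : ∀ X : Matrix (Fin N) (Fin N) ℂ, X.PosSemidef →
      (X.trace).re ≤ ε⁻¹ * ((X * Qt).trace).re := by
    intro X hX
    have h0 : 0 ≤ ((X * (Qt - (ε : ℂ) • 1)).trace).re := psd_trace_mul_re_nonneg hX hεpsd
    rw [Matrix.mul_sub, Matrix.mul_smul, mul_one, Matrix.trace_sub, Matrix.trace_smul] at h0
    simp only [Complex.sub_re, smul_eq_mul, Complex.mul_re, Complex.ofReal_re,
      Complex.ofReal_im, zero_mul, sub_zero] at h0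
    have h1 : ε * (X.trace).re ≤ ((X * Qt).trace).re := by linarith
    calc (X.trace).re = ε⁻¹ * (ε * (X.trace).re) := by field_simp
      _ ≤ ε⁻¹ * ((X * Qt).trace).re := mul_le_mul_of_nonneg_left h1 (by positivity)
  have hiter : ∀ (X : Matrix (Fin N) (Fin N) ℂ), X.PosSemidef → ∀ n,
      ((opK V W U B)^[n] X).PosSemidef ∧
      (((opK V W U B)^[n] X * Qt).trace).re ≤ c^n * ((X * Qt).trace).re := by
    intro X hX n
    induction n with
    | zero =>
      simp only [Function.iterate_zero, id_eq, pow_zero, one_mul]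
      exact ⟨hX, le_rfl⟩
    | succ n ih =>
      obtain ⟨ih1, ih2⟩ := ih
      rw [Function.iterate_succ_apply']
      refine ⟨opK_psd _ _ _ _ ih1, ?_⟩
      calc ((opK V W U B ((opK V W U B)^[n] X) * Qt).trace).re
          ≤ c * (((opK V W U B)^[n] X * Qt).trace).re := hstep _ ih1
        _ ≤ c * (c^n * ((X * Qt).trace).re) := mul_le_mul_of_nonneg_left ih2 hc0
        _ = c^(n+1) * ((X * Qt).trace).re := by ring
  set d := seqd V W U B M with hddef
  set x := seqx V W U B Q M with hxdef
  set y := seqy V W U B Q M with hydef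
  have hd_psd : ∀ n, (d n).PosSemidef := fun n => (hiter M hM.posSemidef n).1
  have hτ : ∀ n, ((d n * Qt).trace).re ≤ c^n * ((M * Qt).trace).re :=
    fun n => (hiter M hM.posSemidef n).2
  have hx0 : x 0 = 0 := rfl
  have hd0 : d 0 = M := rfl
  have hyx : ∀ n, y n = x n + d n := fun n => rfl
  have hxs : ∀ n, x (n+1) = Q + opP V W (x n) - opP U B (y n) := fun n => rfl
  have hys : ∀ n, y (n+1) = Q + opP V W (y n) - opP U B (x n) := fun n =>
    seqy_succ V W U B Q M n
  have hx1 : x 1 = Q - (Uᴴ * M * U + Bᴴ * M * B) := by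
    rw [hxs 0, hyx 0, hx0, hd0, opP_zero, zero_add]
    show Q + 0 - (Uᴴ * M * U + Bᴴ * M * B) = _
    abel
  have hy1 : y 0 - y 1 = (M - (Vᴴ * M * V + Wᴴ * M * W)) - Q := by
    rw [hys 0, hyx 0, hx0, hd0, opP_zero, zero_add]
    show M - (Q + (Vᴴ * M * V + Wᴴ * M * W) - 0) = _
    abel
  have hmono : ∀ n, (x (n+1) - x n).PosSemidef ∧ (y n - y (n+1)).PosSemidef := by
    intro n
    induction n with
    | zero =>
      constructor
      · rw [hx0, sub_zero, hx1]; exact hd1.posSemidef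
      · rw [hy1]; exact hd2.posSemidef
    | succ n ih =>
      constructor
      · have heq : x (n+2) - x (n+1) =
            (opP V W (x (n+1)) - opP V W (x n)) + (opP U B (y n) - opP U B (y (n+1))) := by
          calc x (n+2) - x (n+1)
              = (Q + opP V W (x (n+1)) - opP U B (y (n+1))) -
                (Q + opP V W (x n) - opP U B (y n)) := by rw [← hxs (n+1), ← hxs n]
            _ = (opP V W (x (n+1)) - opP V W (x n)) + (opP U B (y n) - opP U B (y (n+1))) := by
                abel
        rw [← opP_sub V W, ← opP_sub U B] at heq
        rw [heq]
        exact (opP_psd _ _ ih.1).add (opP_psd _ _ ih.2)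
      · have heq : y (n+1) - y (n+2) =
            (opP V W (y n) - opP V W (y (n+1))) + (opP U B (x (n+1)) - opP U B (x n)) := by
          calc y (n+1) - y (n+2)
              = (Q + opP V W (y n) - opP U B (x n)) -
                (Q + opP V W (y (n+1)) - opP U B (x (n+1))) := by rw [← hys (n+1), ← hys n]
            _ = (opP V W (y n) - opP V W (y (n+1))) + (opP U B (x (n+1)) - opP U B (x n)) := by
                abel
        rw [← opP_sub V W, ← opP_sub U B] at heq
        rw [heq]
        exact (opP_psd _ _ ih.2).add (opP_psd _ _ ih.1)
  have hxchain : ∀ n m, n ≤ m → (x m - x n).PosSemidef := by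
    intro n m h
    induction m, h using Nat.le_induction with
    | base => rw [sub_self]; exact .zero
    | succ m hm ih =>
      rw [show x (m+1) - x n = (x (m+1) - x m) + (x m - x n) by abel]
      exact (hmono m).1.add ih
  have hychain : ∀ n m, n ≤ m → (y n - y m).PosSemidef := by
    intro n m h
    induction m, h using Nat.le_induction with
    | base => rw [sub_self]; exact .zero
    | succ m hm ih =>
      rw [show y n - y (m+1) = (y n - y m) + (y m - y (m+1)) by abel]
      exact ih.add (hmono m).2
  have hsand : ∀ n m, n ≤ m → (d n - (x m - x n)).PosSemidef := by
    intro n m h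
    have heq : d n - (x m - x n) = (y n - y m) + d m := by
      have h1 := hyx n
      have h2 := hyx m
      rw [show y n - y m + d m = (x n + d n) - (x m + d m) + d m by rw [← h1, ← h2]]
      abel
    rw [heq]
    exact (hychain n m h).add (hd_psd m)
  have hbound : ∀ n m, n ≤ m → ∀ i j,
      ‖x m i j - x n i j‖ ≤ ε⁻¹ * ((M * Qt).trace).re * c^n := by
    intro n m hnm i j
    have hxm : (x m - x n).PosSemidef := hxchain n m hnm
    have h1 : ‖(x m - x n) i j‖ ≤ ((x m - x n).trace).re := psd_entry_le_trace hxm i j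
    have h2 : ((x m - x n).trace).re ≤ ((d n).trace).re := by
      have h3 := psd_trace_re_nonneg (hsand n m hnm)
      rw [Matrix.trace_sub, Complex.sub_re] at h3
      linarith
    have h3 : ((d n).trace).re ≤ ε⁻¹ * ((d n * Qt).trace).re := htrle _ (hd_psd n)
    have h4 : ε⁻¹ * ((d n * Qt).trace).re ≤ ε⁻¹ * (c^n * ((M * Qt).trace).re) :=
      mul_le_mul_of_nonneg_left (hτ n) (by positivity)
    have h5 : (x m - x n) i j = x m i j - x n i j := Matrix.sub_apply _ _ _ _
    rw [← h5]
    calc ‖(x m - x n) i j‖ ≤ ((x m - x n).trace).re := h1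
      _ ≤ ε⁻¹ * (c^n * ((M * Qt).trace).re) := by linarith
      _ = ε⁻¹ * ((M * Qt).trace).re * c^n := by ring
  have hcauchy : ∀ i j, ∃ z : ℂ, Tendsto (fun n => x n i j) atTop (𝓝 z) := by
    intro i j
    apply cauchySeq_tendsto_of_complete
    apply cauchySeq_of_le_geometric c (ε⁻¹ * ((M * Qt).trace).re) hc1
    intro n
    rw [dist_eq_norm]
    calc ‖x n i j - x (n+1) i j‖ = ‖x (n+1) i j - x n i j‖ := norm_sub_rev _ _
      _ ≤ ε⁻¹ * ((M * Qt).trace).re * c^n := hbound n (n+1) (Nat.le_succ n) i j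
  choose Xf hXf using hcauchy
  set Xh : Matrix (Fin N) (Fin N) ℂ := Matrix.of Xf with hXhdef
  have hxtend : Tendsto x atTop (𝓝 Xh) := by
    refine tendsto_pi_nhds.mpr ?_
    intro i
    rw [tendsto_pi_nhds]
    intro j
    exact hXf i j
  have hgeom : Tendsto (fun n : ℕ => ε⁻¹ * ((M * Qt).trace).re * c^n) atTop (𝓝 0) := by
    have h := (tendsto_pow_atTop_nhds_zero_of_lt_one hc0 hc1).const_mul
      (ε⁻¹ * ((M * Qt).trace).re)
    simpa using h
  have hdtend : Tendsto d atTop (𝓝 0) := by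
    refine tendsto_pi_nhds.mpr ?_
    intro i
    rw [tendsto_pi_nhds]
    intro j
    rw [show (0 : Matrix (Fin N) (Fin N) ℂ) i j = 0 from rfl]
    apply squeeze_zero_norm _ hgeom
    intro n
    calc ‖d n i j‖ ≤ ((d n).trace).re := psd_entry_le_trace (hd_psd n) i j
      _ ≤ ε⁻¹ * ((d n * Qt).trace).re := htrle _ (hd_psd n)
      _ ≤ ε⁻¹ * (c^n * ((M * Qt).trace).re) :=
          mul_le_mul_of_nonneg_left (hτ n) (by positivity)
      _ = ε⁻¹ * ((M * Qt).trace).re * c^n := by ring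
  have hytend : Tendsto y atTop (𝓝 Xh) := by
    have h := hxtend.add hdtend
    rw [add_zero] at h
    exact h.congr (fun n => (hyx n).symm)
  have hcontP : ∀ G1 G2 : Matrix (Fin N) (Fin N) ℂ, Continuous (fun X => opP G1 G2 X) := by
    intro G1 G2
    simp only [opP]
    exact ((continuous_const.matrix_mul continuous_id).matrix_mul continuous_const).add
      ((continuous_const.matrix_mul continuous_id).matrix_mul continuous_const)
  have hfix : Xh = Q + opP V W Xh - opP U B Xh := by
    have h1 : Tendsto (fun n => x (n+1)) atTop (𝓝 Xh) :=
      hxtend.comp (tendsto_add_atTop_nat 1)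
    have hp : Tendsto (fun n => opP V W (x n)) atTop (𝓝 (opP V W Xh)) :=
      ((hcontP V W).tendsto Xh).comp hxtend
    have hm2 : Tendsto (fun n => opP U B (y n)) atTop (𝓝 (opP U B Xh)) :=
      ((hcontP U B).tendsto Xh).comp hytend
    have h2 : Tendsto (fun n => Q + opP V W (x n) - opP U B (y n)) atTop
        (𝓝 (Q + opP V W Xh - opP U B Xh)) :=
      (tendsto_const_nhds.add hp).sub hm2
    have h3 : (fun n => x (n+1)) = fun n => Q + opP V W (x n) - opP U B (y n) :=
      funext fun n => hxs n
    rw [h3] at h1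
    exact tendsto_nhds_unique h1 h2
  have heqX : ∀ X : Matrix (Fin N) (Fin N) ℂ,
      opP V W X - opP U B X = Aᴴ * X * B + Bᴴ * X * A + X := fun X => key_id hU hV hW X
  have heq : Aᴴ * Xh * B + Bᴴ * Xh * A = -Q := by
    have h := hfix
    have h2 : Q + opP V W Xh - opP U B Xh = Q + (Aᴴ * Xh * B + Bᴴ * Xh * A + Xh) := by
      rw [← heqX Xh]; abel
    rw [h2] at h
    have h4 : Aᴴ * Xh * B + Bᴴ * Xh * A =
        Q + (Aᴴ * Xh * B + Bᴴ * Xh * A + Xh) - Xh - Q := by abel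
    rw [← h] at h4
    rw [h4]
    abel
  have hx1pd : (x 1).PosDef := by rw [hx1]; exact hd1
  have hxh1 : (Xh - x 1).PosSemidef := by
    apply psd_limit (Z := fun n => x (n+1) - x 1)
    · intro n
      exact hxchain 1 (n+1) (by omega)
    · exact (hxtend.comp (tendsto_add_atTop_nat 1)).sub tendsto_const_nhds
  have hXhpd : Xh.PosDef := by
    have h := hx1pd.add_posSemidef hxh1
    rwa [show x 1 + (Xh - x 1) = Xh by abel] at h
  refine ⟨Xh, ⟨hXhpd, heq⟩, ?_⟩
  rintro X' ⟨hX'pd, hX'eq⟩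
  have hfix' : X' = Q + opP V W X' - opP U B X' := by
    have h2 : Q + opP V W X' - opP U B X' = Q + (Aᴴ * X' * B + Bᴴ * X' * A + X') := by
      rw [← heqX X']; abel
    rw [h2, hX'eq]
    abel
  set Δ : Matrix (Fin N) (Fin N) ℂ := X' - Xh with hΔdef
  have hΔ : Δ = opP V W Δ - opP U B Δ := by
    rw [hΔdef, opP_sub, opP_sub]
    calc X' - Xh = (Q + opP V W X' - opP U B X') - (Q + opP V W Xh - opP U B Xh) := by
          rw [← hfix', ← hfix]
      _ = opP V W X' - opP V W Xh - (opP U B X' - opP U B Xh) := by abel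
  have hΔherm : Δ.IsHermitian := hX'pd.1.sub hXhpd.1
  obtain ⟨β1, hβ1, hb1⟩ := exists_upper hΔherm
  obtain ⟨β2, hβ2, hb2⟩ := exists_upper hΔherm.neg
  set P : Matrix (Fin N) (Fin N) ℂ := ((β1 + β2 : ℝ) : ℂ) • 1 with hPdef
  have hPpsd : P.PosSemidef := psd_smul .one (by linarith)
  have hP1 : (P - Δ).PosSemidef := by
    have heq2 : P - Δ = ((β1 : ℂ) • 1 - Δ) + (β2 : ℂ) • (1 : Matrix (Fin N) (Fin N) ℂ) := by
      rw [hPdef]; push_cast; module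
    rw [heq2]
    exact hb1.add (psd_smul .one hβ2.le)
  have hP2 : (P + Δ).PosSemidef := by
    have heq2 : P + Δ = ((β2 : ℂ) • 1 - (-Δ)) + (β1 : ℂ) • (1 : Matrix (Fin N) (Fin N) ℂ) := by
      rw [hPdef]; push_cast; module
    rw [heq2]
    exact hb2.add (psd_smul .one hβ1.le)
  have hsand2 : ∀ n, ((opK V W U B)^[n] P - Δ).PosSemidef ∧
      ((opK V W U B)^[n] P + Δ).PosSemidef := by
    intro n
    induction n with
    | zero => simpa using ⟨hP1, hP2⟩
    | succ n ih =>
      rw [Function.iterate_succ_apply']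
      constructor
      · have e1 : opK V W U B ((opK V W U B)^[n] P) - Δ =
            opP V W ((opK V W U B)^[n] P - Δ) + opP U B ((opK V W U B)^[n] P + Δ) := by
          rw [opP_sub, opP_add, show opK V W U B ((opK V W U B)^[n] P) =
            opP V W ((opK V W U B)^[n] P) + opP U B ((opK V W U B)^[n] P) from rfl]
          conv_lhs => rw [hΔ]
          abel
        rw [e1]
        exact (opP_psd _ _ ih.1).add (opP_psd _ _ ih.2)
      · have e2 : opK V W U B ((opK V W U B)^[n] P) + Δ =
            opP V W ((opK V W U B)^[n] P + Δ) + opP U B ((opK V W U B)^[n] P - Δ) := by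
          rw [opP_sub, opP_add, show opK V W U B ((opK V W U B)^[n] P) =
            opP V W ((opK V W U B)^[n] P) + opP U B ((opK V W U B)^[n] P) from rfl]
          conv_lhs => rw [hΔ]
          abel
        rw [e2]
        exact (opP_psd _ _ ih.2).add (opP_psd _ _ ih.1)
  have hbound2 : ∀ n i j, ‖Δ i j‖ ≤ 3 * (ε⁻¹ * ((P * Qt).trace).re) * c^n := by
    intro n i j
    have hGpsd := (hiter P hPpsd n).1
    have hGτ := (hiter P hPpsd n).2
    have hGtr : (((opK V W U B)^[n] P).trace).re ≤ ε⁻¹ * (c^n * ((P * Qt).trace).re) :=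
      le_trans (htrle _ hGpsd) (mul_le_mul_of_nonneg_left hGτ (by positivity))
    have hA1 : ‖((opK V W U B)^[n] P + Δ) i j‖ ≤ (((opK V W U B)^[n] P + Δ).trace).re :=
      psd_entry_le_trace (hsand2 n).2 i j
    have hA2 : ‖((opK V W U B)^[n] P) i j‖ ≤ (((opK V W U B)^[n] P).trace).re :=
      psd_entry_le_trace hGpsd i j
    have hA3 : (((opK V W U B)^[n] P + Δ).trace).re ≤
        2 * (((opK V W U B)^[n] P).trace).re := by
      have h5 := psd_trace_re_nonneg (hsand2 n).1
      rw [Matrix.trace_sub, Complex.sub_re] at h5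
      rw [Matrix.trace_add, Complex.add_re]
      linarith
    have hδij : Δ i j = ((opK V W U B)^[n] P + Δ) i j - ((opK V W U B)^[n] P) i j := by
      rw [Matrix.add_apply]
      ring
    rw [hδij]
    calc ‖((opK V W U B)^[n] P + Δ) i j - ((opK V W U B)^[n] P) i j‖
        ≤ ‖((opK V W U B)^[n] P + Δ) i j‖ + ‖((opK V W U B)^[n] P) i j‖ := norm_sub_le _ _
      _ ≤ 3 * (ε⁻¹ * (c^n * ((P * Qt).trace).re)) := by linarith
      _ = 3 * (ε⁻¹ * ((P * Qt).trace).re) * c^n := by ring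
  have hΔ0 : Δ = 0 := by
    ext i j
    have htend3 : Tendsto (fun n : ℕ => 3 * (ε⁻¹ * ((P * Qt).trace).re) * c^n) atTop (𝓝 0) := by
      have h := (tendsto_pow_atTop_nhds_zero_of_lt_one hc0 hc1).const_mul
        (3 * (ε⁻¹ * ((P * Qt).trace).re))
      simpa using h
    have hle : ‖Δ i j‖ ≤ 0 := ge_of_tendsto' htend3 (fun n => hbound2 n i j)
    have : Δ i j = 0 := norm_le_zero_iff.mp hle
    simpa using this
  rw [hΔdef] at hΔ0
  exact sub_eq_zero.mp hΔ0
end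

section
/- Under the hypotheses (a)–(d) of the main theorem (existence of Hermitian positive definite Q̃ and M with 2(U Q̃ U* + B Q̃ B*) < Q̃, 2(V Q̃ V* + W Q̃ W*) < Q̃, U*MU + B*MB < M − (V*MV + W*MW), and U*MU + B*MB < Q < M − (V*MV + W*MW)), the unique Hermitian positive definite solution X̂ of A*XB + B*XA = −Q satisfies Q − (U*MU + B*MB) ≤ X̂ ≤ Q + (V*MV + W*MW). -/
open Matrix Filter
open scoped ComplexOrder

namespace Stmt8Aux

variable {N : ℕ}

lemma smulPSD {c : ℝ} (hc : 0 ≤ c) {A : Matrix (Fin N) (Fin N) ℂ} (hA : A.PosSemidef) :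
    ((c : ℂ) • A).PosSemidef := by
  rw [posSemidef_iff_dotProduct_mulVec]
  constructor
  · show ((c : ℂ) • A)ᴴ = (c : ℂ) • A
    rw [conjTranspose_smul, Complex.star_def, Complex.conj_ofReal, hA.1.eq]
  · intro x
    have h2 := hA.dotProduct_mulVec_nonneg x
    rw [smul_mulVec, dotProduct_smul]
    exact smul_nonneg (by exact_mod_cast hc) h2

lemma psd_of_fin_zero (h : N = 0) (A : Matrix (Fin N) (Fin N) ℂ) : A.PosSemidef := by
  subst h
  exact ⟨by ext i j; exact i.elim0, fun x => by simp [Subsingleton.elim x 0]⟩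

lemma upperBound {R : Matrix (Fin N) (Fin N) ℂ} (hR : R.IsHermitian) :
    ∃ r : ℝ, 0 < r ∧ (((r : ℂ) • (1 : Matrix (Fin N) (Fin N) ℂ)) - R).PosSemidef := by
  classical
  set lam := hR.eigenvalues with hlam
  refine ⟨∑ i, |lam i| + 1, by positivity, ?_⟩
  set r : ℝ := ∑ i, |lam i| + 1 with hr
  have hle : ∀ i, lam i ≤ r := by
    intro i
    have h1 : lam i ≤ |lam i| := le_abs_self _
    have h2 : |lam i| ≤ ∑ j, |lam j| :=
      Finset.single_le_sum (fun j _ => abs_nonneg (lam j)) (Finset.mem_univ i)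
    simp only [hr]; linarith
  have hdiag : Matrix.PosSemidef (diagonal (fun i => ((r - lam i : ℝ) : ℂ))) := by
    rw [posSemidef_diagonal_iff]
    intro i
    have : (0:ℝ) ≤ r - lam i := by linarith [hle i]
    exact_mod_cast this
  have hkey : ((r : ℂ) • (1 : Matrix (Fin N) (Fin N) ℂ)) - R
      = (hR.eigenvectorUnitary : Matrix (Fin N) (Fin N) ℂ) *
        diagonal (fun i => ((r - lam i : ℝ) : ℂ)) *
        (star (hR.eigenvectorUnitary : Matrix (Fin N) (Fin N) ℂ)) := by
    have hsp := hR.spectral_theorem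
    rw [Unitary.conjStarAlgAut_apply] at hsp
    have hUn : (hR.eigenvectorUnitary : Matrix (Fin N) (Fin N) ℂ) *
        (star (hR.eigenvectorUnitary : Matrix (Fin N) (Fin N) ℂ)) = 1 :=
      (Matrix.mem_unitaryGroup_iff).mp hR.eigenvectorUnitary.2
    have hd : diagonal (fun i => ((r - lam i : ℝ) : ℂ))
        = (r : ℂ) • (1 : Matrix (Fin N) (Fin N) ℂ) - diagonal (RCLike.ofReal ∘ lam) := by
      have hfun : (fun i => ((r - lam i : ℝ) : ℂ))
          = fun i => (r : ℂ) - (RCLike.ofReal ∘ lam) i := by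
        funext i; simp [Function.comp]
      rw [hfun, smul_one_eq_diagonal, ← diagonal_sub]
    rw [hd, mul_sub, sub_mul, ← hsp, Matrix.mul_smul, Matrix.mul_one, Matrix.smul_mul, hUn]
  rw [hkey]
  exact hdiag.mul_mul_conjTranspose_same _

lemma lowerBound {M : Matrix (Fin N) (Fin N) ℂ} (hM : M.PosDef) :
    ∃ m : ℝ, 0 < m ∧ (M - (m : ℂ) • (1 : Matrix (Fin N) (Fin N) ℂ)).PosSemidef := by
  classical
  rcases Nat.eq_zero_or_pos N with h0 | hpos
  · exact ⟨1, one_pos, psd_of_fin_zero h0 _⟩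
  haveI : Nonempty (Fin N) := ⟨⟨0, hpos⟩⟩
  set hR := hM.isHermitian with hhR
  set lam := hR.eigenvalues with hlam
  refine ⟨Finset.univ.inf' Finset.univ_nonempty lam, ?_, ?_⟩
  · obtain ⟨i, _, hi⟩ := Finset.exists_mem_eq_inf' Finset.univ_nonempty lam
    rw [hi]; exact hM.eigenvalues_pos i
  set m : ℝ := Finset.univ.inf' Finset.univ_nonempty lam with hm
  have hle : ∀ i, m ≤ lam i := fun i => Finset.inf'_le _ (Finset.mem_univ i)
  have hdiag : Matrix.PosSemidef (diagonal (fun i => ((lam i - m : ℝ) : ℂ))) := by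
    rw [posSemidef_diagonal_iff]
    intro i
    have : (0:ℝ) ≤ lam i - m := by linarith [hle i]
    exact_mod_cast this
  have hUn : (hR.eigenvectorUnitary : Matrix (Fin N) (Fin N) ℂ) *
      (star (hR.eigenvectorUnitary : Matrix (Fin N) (Fin N) ℂ)) = 1 :=
    (Matrix.mem_unitaryGroup_iff).mp hR.eigenvectorUnitary.2
  have hkey : M - (m : ℂ) • (1 : Matrix (Fin N) (Fin N) ℂ)
      = (hR.eigenvectorUnitary : Matrix (Fin N) (Fin N) ℂ) *
        diagonal (fun i => ((lam i - m : ℝ) : ℂ)) *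
        (star (hR.eigenvectorUnitary : Matrix (Fin N) (Fin N) ℂ)) := by
    have hsp := hR.spectral_theorem
    rw [Unitary.conjStarAlgAut_apply] at hsp
    have hd : diagonal (fun i => ((lam i - m : ℝ) : ℂ))
        = diagonal (RCLike.ofReal ∘ lam) - (m : ℂ) • (1 : Matrix (Fin N) (Fin N) ℂ) := by
      have hfun : (fun i => ((lam i - m : ℝ) : ℂ))
          = fun i => (RCLike.ofReal ∘ lam) i - (m : ℂ) := by
        funext i; simp [Function.comp]
      rw [hfun, smul_one_eq_diagonal, ← diagonal_sub]
    rw [hd, mul_sub, sub_mul, ← hsp, Matrix.mul_smul, Matrix.mul_one, Matrix.smul_mul, hUn]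
  rw [hkey]
  exact hdiag.mul_mul_conjTranspose_same _

lemma dominate {M R : Matrix (Fin N) (Fin N) ℂ} (hM : M.PosDef) (hR : R.IsHermitian) :
    ∃ t : ℝ, 0 < t ∧ (((t : ℂ) • M) - R).PosSemidef := by
  obtain ⟨r, hr, hrPSD⟩ := upperBound hR
  obtain ⟨m, hm, hmPSD⟩ := lowerBound hM
  refine ⟨r / m, div_pos hr hm, ?_⟩
  have htm : (r / m) * m = r := div_mul_cancel₀ _ hm.ne'
  have htmC : ((r/m : ℝ) : ℂ) * ((m : ℝ) : ℂ) = ((r : ℝ) : ℂ) := by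
    exact_mod_cast congrArg Complex.ofReal htm
  have hkey : ((r/m : ℝ) : ℂ) • M - R
      = ((r/m : ℝ) : ℂ) • (M - (m : ℂ) • (1 : Matrix (Fin N) (Fin N) ℂ))
        + (((r : ℂ) • (1 : Matrix (Fin N) (Fin N) ℂ)) - R) := by
    rw [smul_sub, smul_smul, htmC]
    abel
  rw [hkey]
  exact (smulPSD (le_of_lt (div_pos hr hm)) hmPSD).add hrPSD

lemma key_id (A B X U V W : Matrix (Fin N) (Fin N) ℂ)
    (hU : U = ((Real.sqrt 2 : ℂ))⁻¹ • (A - B + 1))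
    (hV : V = ((Real.sqrt 2 : ℂ))⁻¹ • (A + B + 1))
    (hW : W = B - 1) :
    Vᴴ * X * V + Wᴴ * X * W - (Uᴴ * X * U + Bᴴ * X * B)
      = Aᴴ * X * B + Bᴴ * X * A + X := by
  have hs : ((Real.sqrt 2 : ℂ))⁻¹ * ((Real.sqrt 2 : ℂ))⁻¹ = (2:ℂ)⁻¹ := by
    have h2 : (Real.sqrt 2 : ℂ) * (Real.sqrt 2 : ℂ) = 2 := by
      norm_cast
      exact Real.mul_self_sqrt (by norm_num)
    rw [← mul_inv, h2]
  subst hU hV hW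
  simp only [conjTranspose_smul, Complex.star_def, map_inv₀, Complex.conj_ofReal]
  simp only [Matrix.smul_mul, Matrix.mul_smul, smul_smul, hs]
  simp only [conjTranspose_add, conjTranspose_sub, conjTranspose_one]
  simp only [Matrix.add_mul, Matrix.sub_mul, Matrix.mul_add, Matrix.mul_sub,
    Matrix.mul_one, Matrix.one_mul]
  module

lemma squeeze {E M : Matrix (Fin N) (Fin N) ℂ} (hE : E.IsHermitian)
    {c s₀ : ℝ} (hc0 : 0 ≤ c) (hc1 : c < 1) (hs₀ : 0 ≤ s₀)
    (h : ∀ n : ℕ, (E + ((s₀ * c^n : ℝ) : ℂ) • M).PosSemidef) : E.PosSemidef := by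
  refine posSemidef_iff_dotProduct_mulVec.mpr ⟨hE, fun x => ?_⟩
  set a := star x ⬝ᵥ E *ᵥ x with ha
  set b := star x ⬝ᵥ M *ᵥ x with hb
  have hn : ∀ n : ℕ, (0:ℂ) ≤ a + ((s₀ * c^n : ℝ) : ℂ) * b := by
    intro n
    have h2 := (h n).dotProduct_mulVec_nonneg x
    rwa [add_mulVec, dotProduct_add, smul_mulVec, dotProduct_smul, smul_eq_mul] at h2
  by_cases h0 : s₀ = 0
  · have h3 := hn 0
    simpa [h0] using h3
  · have him : ∀ n : ℕ, 0 = a.im + (s₀ * c^n) * b.im := by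
      intro n
      have e := (Complex.le_def.mp (hn n)).2
      rw [Complex.add_im, Complex.im_ofReal_mul] at e
      simpa using e
    have e0 := him 0
    have e1 := him 1
    have hbim : b.im = 0 := by
      have h' : s₀ * (1 - c) * b.im = 0 := by
        ring_nf
        ring_nf at e0 e1
        linarith
      rcases mul_eq_zero.mp h' with h'' | h''
      · rcases mul_eq_zero.mp h'' with h3 | h3
        · exact absurd h3 h0
        · exact absurd (by linarith : c = 1) hc1.ne
      · exact h''
    have haim : a.im = 0 := by
      have := him 0
      simp [hbim] at this
      linarith
    have hre : ∀ n : ℕ, 0 ≤ a.re + s₀ * c^n * b.re := by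
      intro n
      have e := (Complex.le_def.mp (hn n)).1
      rw [Complex.add_re, Complex.re_ofReal_mul] at e
      simpa using e
    have htend : Tendsto (fun n : ℕ => a.re + s₀ * c^n * b.re) atTop (nhds a.re) := by
      have h1 : Tendsto (fun n : ℕ => (c:ℝ)^n) atTop (nhds 0) :=
        tendsto_pow_atTop_nhds_zero_of_lt_one hc0 hc1
      have h2 : Tendsto (fun n : ℕ => s₀ * c^n * b.re) atTop (nhds 0) := by
        simpa using (h1.const_mul s₀).mul_const b.re
      simpa using tendsto_const_nhds.add h2
    have hre0 : 0 ≤ a.re := ge_of_tendsto htend (Eventually.of_forall hre)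
    rw [Complex.le_def]
    exact ⟨by simpa using hre0, by simp [haim]⟩

lemma psd_neg_eq_zero {Z : Matrix (Fin N) (Fin N) ℂ}
    (h1 : Z.PosSemidef) (h2 : (-Z).PosSemidef) : Z = 0 := by
  have hv : ∀ x, Z *ᵥ x = 0 := by
    intro x
    rw [← h1.dotProduct_mulVec_zero_iff]
    have ha := h1.dotProduct_mulVec_nonneg x
    have hb := h2.dotProduct_mulVec_nonneg x
    rw [neg_mulVec, dotProduct_neg] at hb
    exact le_antisymm (neg_nonneg.mp hb) ha
  ext i j
  have h := congrFun (hv (Pi.single j 1)) i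
  simpa [mulVec_single] using h

lemma step_bound (U V W B Q M X : Matrix (Fin N) (Fin N) ℂ) (c : ℝ) (hc0 : 0 ≤ c)
    (hshrink : ((c : ℂ) • M - ((Uᴴ*M*U + Bᴴ*M*B) + (Vᴴ*M*V + Wᴴ*M*W))).PosSemidef)
    (hQlo : (Q - (Uᴴ*M*U + Bᴴ*M*B)).PosSemidef)
    (hQhi : ((M - (Vᴴ*M*V + Wᴴ*M*W)) - Q).PosSemidef)
    (hfix : X = Q + ((Vᴴ*X*V + Wᴴ*X*W) - (Uᴴ*X*U + Bᴴ*X*B)))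
    (s : ℝ) (hs : 0 ≤ s)
    (h1 : (X - (Q - (Uᴴ*M*U + Bᴴ*M*B)) + (s : ℂ) • M).PosSemidef)
    (h2 : ((Q + (Vᴴ*M*V + Wᴴ*M*W)) - X + (s : ℂ) • M).PosSemidef) :
    (X - (Q - (Uᴴ*M*U + Bᴴ*M*B)) + ((c*s : ℝ) : ℂ) • M).PosSemidef ∧
    ((Q + (Vᴴ*M*V + Wᴴ*M*W)) - X + ((c*s : ℝ) : ℂ) • M).PosSemidef := by
  have hXp : (X + (s : ℂ) • M).PosSemidef := by
    have e : X + (s : ℂ) • M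
        = (X - (Q - (Uᴴ*M*U + Bᴴ*M*B)) + (s : ℂ) • M) + (Q - (Uᴴ*M*U + Bᴴ*M*B)) := by
      abel
    rw [e]; exact h1.add hQlo
  have hXm : (((1+s : ℝ) : ℂ) • M - X).PosSemidef := by
    have e : ((1+s : ℝ) : ℂ) • M - X
        = ((Q + (Vᴴ*M*V + Wᴴ*M*W)) - X + (s : ℂ) • M) + ((M - (Vᴴ*M*V + Wᴴ*M*W)) - Q) := by
      push_cast
      module
    rw [e]; exact h2.add hQhi
  -- conjugated versions
  have lo1 : ((Uᴴ*X*U + Bᴴ*X*B) + (s : ℂ) • (Uᴴ*M*U + Bᴴ*M*B)).PosSemidef := by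
    have e : (Uᴴ*X*U + Bᴴ*X*B) + (s : ℂ) • (Uᴴ*M*U + Bᴴ*M*B)
        = Uᴴ*(X + (s:ℂ)•M)*U + Bᴴ*(X + (s:ℂ)•M)*B := by
      simp only [Matrix.mul_add, Matrix.add_mul, Matrix.mul_smul, Matrix.smul_mul]
      module
    rw [e]; exact (hXp.conjTranspose_mul_mul_same U).add (hXp.conjTranspose_mul_mul_same B)
  have lo2 : ((Vᴴ*X*V + Wᴴ*X*W) + (s : ℂ) • (Vᴴ*M*V + Wᴴ*M*W)).PosSemidef := by
    have e : (Vᴴ*X*V + Wᴴ*X*W) + (s : ℂ) • (Vᴴ*M*V + Wᴴ*M*W)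
        = Vᴴ*(X + (s:ℂ)•M)*V + Wᴴ*(X + (s:ℂ)•M)*W := by
      simp only [Matrix.mul_add, Matrix.add_mul, Matrix.mul_smul, Matrix.smul_mul]
      module
    rw [e]; exact (hXp.conjTranspose_mul_mul_same V).add (hXp.conjTranspose_mul_mul_same W)
  have up1 : (((1+s : ℝ) : ℂ) • (Uᴴ*M*U + Bᴴ*M*B) - (Uᴴ*X*U + Bᴴ*X*B)).PosSemidef := by
    have e : ((1+s : ℝ) : ℂ) • (Uᴴ*M*U + Bᴴ*M*B) - (Uᴴ*X*U + Bᴴ*X*B)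
        = Uᴴ*(((1+s : ℝ) : ℂ) • M - X)*U + Bᴴ*(((1+s : ℝ) : ℂ) • M - X)*B := by
      simp only [Matrix.mul_sub, Matrix.sub_mul, Matrix.mul_add, Matrix.add_mul,
        Matrix.mul_smul, Matrix.smul_mul]
      module
    rw [e]; exact (hXm.conjTranspose_mul_mul_same U).add (hXm.conjTranspose_mul_mul_same B)
  have up2 : (((1+s : ℝ) : ℂ) • (Vᴴ*M*V + Wᴴ*M*W) - (Vᴴ*X*V + Wᴴ*X*W)).PosSemidef := by
    have e : ((1+s : ℝ) : ℂ) • (Vᴴ*M*V + Wᴴ*M*W) - (Vᴴ*X*V + Wᴴ*X*W)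
        = Vᴴ*(((1+s : ℝ) : ℂ) • M - X)*V + Wᴴ*(((1+s : ℝ) : ℂ) • M - X)*W := by
      simp only [Matrix.mul_sub, Matrix.sub_mul, Matrix.mul_add, Matrix.add_mul,
        Matrix.mul_smul, Matrix.smul_mul]
      module
    rw [e]; exact (hXm.conjTranspose_mul_mul_same V).add (hXm.conjTranspose_mul_mul_same W)
  have hsmul : ((s : ℂ) • ((c : ℂ) • M - ((Uᴴ*M*U + Bᴴ*M*B) + (Vᴴ*M*V + Wᴴ*M*W)))).PosSemidef :=
    smulPSD hs hshrink
  constructor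
  · have e : X - (Q - (Uᴴ*M*U + Bᴴ*M*B)) + ((c*s : ℝ) : ℂ) • M
        = ((Vᴴ*X*V + Wᴴ*X*W) + (s : ℂ) • (Vᴴ*M*V + Wᴴ*M*W))
          + (((1+s : ℝ) : ℂ) • (Uᴴ*M*U + Bᴴ*M*B) - (Uᴴ*X*U + Bᴴ*X*B))
          + ((s : ℂ) • ((c : ℂ) • M - ((Uᴴ*M*U + Bᴴ*M*B) + (Vᴴ*M*V + Wᴴ*M*W)))) := by
      set y1 := Uᴴ*X*U + Bᴴ*X*B with hy1
      set y2 := Vᴴ*X*V + Wᴴ*X*W with hy2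
      rw [hfix]
      push_cast
      module
    rw [e]; exact (lo2.add up1).add hsmul
  · have e : (Q + (Vᴴ*M*V + Wᴴ*M*W)) - X + ((c*s : ℝ) : ℂ) • M
        = (((1+s : ℝ) : ℂ) • (Vᴴ*M*V + Wᴴ*M*W) - (Vᴴ*X*V + Wᴴ*X*W))
          + ((Uᴴ*X*U + Bᴴ*X*B) + (s : ℂ) • (Uᴴ*M*U + Bᴴ*M*B))
          + ((s : ℂ) • ((c : ℂ) • M - ((Uᴴ*M*U + Bᴴ*M*B) + (Vᴴ*M*V + Wᴴ*M*W)))) := by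
      set y1 := Uᴴ*X*U + Bᴴ*X*B with hy1
      set y2 := Vᴴ*X*V + Wᴴ*X*W with hy2
      rw [hfix]
      push_cast
      module
    rw [e]; exact (up2.add lo1).add hsmul

lemma step_zero (U V W B M Z : Matrix (Fin N) (Fin N) ℂ) (c : ℝ)
    (hshrink : ((c : ℂ) • M - ((Uᴴ*M*U + Bᴴ*M*B) + (Vᴴ*M*V + Wᴴ*M*W))).PosSemidef)
    (hfix : Z = (Vᴴ*Z*V + Wᴴ*Z*W) - (Uᴴ*Z*U + Bᴴ*Z*B))
    (s : ℝ) (hs : 0 ≤ s)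
    (h1 : ((s : ℂ) • M - Z).PosSemidef)
    (h2 : ((s : ℂ) • M + Z).PosSemidef) :
    (((c*s : ℝ) : ℂ) • M - Z).PosSemidef ∧ (((c*s : ℝ) : ℂ) • M + Z).PosSemidef := by
  have m1 : ((s : ℂ) • (Uᴴ*M*U + Bᴴ*M*B) - (Uᴴ*Z*U + Bᴴ*Z*B)).PosSemidef := by
    have e : (s : ℂ) • (Uᴴ*M*U + Bᴴ*M*B) - (Uᴴ*Z*U + Bᴴ*Z*B)
        = Uᴴ*((s:ℂ)•M - Z)*U + Bᴴ*((s:ℂ)•M - Z)*B := by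
      simp only [Matrix.mul_sub, Matrix.sub_mul, Matrix.mul_add, Matrix.add_mul,
        Matrix.mul_smul, Matrix.smul_mul]
      module
    rw [e]; exact (h1.conjTranspose_mul_mul_same U).add (h1.conjTranspose_mul_mul_same B)
  have m2 : ((s : ℂ) • (Vᴴ*M*V + Wᴴ*M*W) - (Vᴴ*Z*V + Wᴴ*Z*W)).PosSemidef := by
    have e : (s : ℂ) • (Vᴴ*M*V + Wᴴ*M*W) - (Vᴴ*Z*V + Wᴴ*Z*W)
        = Vᴴ*((s:ℂ)•M - Z)*V + Wᴴ*((s:ℂ)•M - Z)*W := by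
      simp only [Matrix.mul_sub, Matrix.sub_mul, Matrix.mul_add, Matrix.add_mul,
        Matrix.mul_smul, Matrix.smul_mul]
      module
    rw [e]; exact (h1.conjTranspose_mul_mul_same V).add (h1.conjTranspose_mul_mul_same W)
  have p1 : ((s : ℂ) • (Uᴴ*M*U + Bᴴ*M*B) + (Uᴴ*Z*U + Bᴴ*Z*B)).PosSemidef := by
    have e : (s : ℂ) • (Uᴴ*M*U + Bᴴ*M*B) + (Uᴴ*Z*U + Bᴴ*Z*B)
        = Uᴴ*((s:ℂ)•M + Z)*U + Bᴴ*((s:ℂ)•M + Z)*B := by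
      simp only [Matrix.mul_add, Matrix.add_mul, Matrix.mul_smul, Matrix.smul_mul]
      module
    rw [e]; exact (h2.conjTranspose_mul_mul_same U).add (h2.conjTranspose_mul_mul_same B)
  have p2 : ((s : ℂ) • (Vᴴ*M*V + Wᴴ*M*W) + (Vᴴ*Z*V + Wᴴ*Z*W)).PosSemidef := by
    have e : (s : ℂ) • (Vᴴ*M*V + Wᴴ*M*W) + (Vᴴ*Z*V + Wᴴ*Z*W)
        = Vᴴ*((s:ℂ)•M + Z)*V + Wᴴ*((s:ℂ)•M + Z)*W := by
      simp only [Matrix.mul_add, Matrix.add_mul, Matrix.mul_smul, Matrix.smul_mul]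
      module
    rw [e]; exact (h2.conjTranspose_mul_mul_same V).add (h2.conjTranspose_mul_mul_same W)
  have hsmul : ((s : ℂ) • ((c : ℂ) • M - ((Uᴴ*M*U + Bᴴ*M*B) + (Vᴴ*M*V + Wᴴ*M*W)))).PosSemidef :=
    smulPSD hs hshrink
  constructor
  · have e : ((c*s : ℝ) : ℂ) • M - Z
        = ((s : ℂ) • (Vᴴ*M*V + Wᴴ*M*W) - (Vᴴ*Z*V + Wᴴ*Z*W))
          + ((s : ℂ) • (Uᴴ*M*U + Bᴴ*M*B) + (Uᴴ*Z*U + Bᴴ*Z*B))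
          + ((s : ℂ) • ((c : ℂ) • M - ((Uᴴ*M*U + Bᴴ*M*B) + (Vᴴ*M*V + Wᴴ*M*W)))) := by
      set y1 := Uᴴ*Z*U + Bᴴ*Z*B with hy1
      set y2 := Vᴴ*Z*V + Wᴴ*Z*W with hy2
      rw [hfix]
      push_cast
      module
    rw [e]; exact (m2.add p1).add hsmul
  · have e : ((c*s : ℝ) : ℂ) • M + Z
        = ((s : ℂ) • (Vᴴ*M*V + Wᴴ*M*W) + (Vᴴ*Z*V + Wᴴ*Z*W))
          + ((s : ℂ) • (Uᴴ*M*U + Bᴴ*M*B) - (Uᴴ*Z*U + Bᴴ*Z*B))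
          + ((s : ℂ) • ((c : ℂ) • M - ((Uᴴ*M*U + Bᴴ*M*B) + (Vᴴ*M*V + Wᴴ*M*W)))) := by
      set y1 := Uᴴ*Z*U + Bᴴ*Z*B with hy1
      set y2 := Vᴴ*Z*V + Wᴴ*Z*W with hy2
      rw [hfix]
      push_cast
      module
    rw [e]; exact (p2.add m1).add hsmul

end Stmt8Aux

open Stmt8Aux

theorem stmt8 {N : ℕ} (A B Q Qt M : Matrix (Fin N) (Fin N) ℂ)
    (hQ : Q.PosDef) (hQt : Qt.PosDef) (hM : M.PosDef)
    (U V W : Matrix (Fin N) (Fin N) ℂ)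
    (hU : U = ((Real.sqrt 2 : ℂ))⁻¹ • (A - B + 1))
    (hV : V = ((Real.sqrt 2 : ℂ))⁻¹ • (A + B + 1))
    (hW : W = B - 1)
    (ha : (Qt - 2 • (U * Qt * Uᴴ + B * Qt * Bᴴ)).PosDef)
    (hb : (Qt - 2 • (V * Qt * Vᴴ + W * Qt * Wᴴ)).PosDef)
    (hc : ((M - (Vᴴ * M * V + Wᴴ * M * W)) - (Uᴴ * M * U + Bᴴ * M * B)).PosDef)
    (hd1 : (Q - (Uᴴ * M * U + Bᴴ * M * B)).PosDef)
    (hd2 : ((M - (Vᴴ * M * V + Wᴴ * M * W)) - Q).PosDef) :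
    (∃! X : Matrix (Fin N) (Fin N) ℂ, X.PosDef ∧ Aᴴ * X * B + Bᴴ * X * A = -Q) ∧
    ∀ X : Matrix (Fin N) (Fin N) ℂ, X.PosDef → Aᴴ * X * B + Bᴴ * X * A = -Q →
      (X - (Q - (Uᴴ * M * U + Bᴴ * M * B))).PosSemidef ∧
      ((Q + (Vᴴ * M * V + Wᴴ * M * W)) - X).PosSemidef := by
  classical
  have kid : ∀ X : Matrix (Fin N) (Fin N) ℂ,
      Vᴴ*X*V + Wᴴ*X*W - (Uᴴ*X*U + Bᴴ*X*B) = Aᴴ*X*B + Bᴴ*X*A + X :=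
    fun X => key_id A B X U V W hU hV hW
  have hS1Mh : (Uᴴ*M*U + Bᴴ*M*B).IsHermitian :=
    (isHermitian_conjTranspose_mul_mul U hM.1).add (isHermitian_conjTranspose_mul_mul B hM.1)
  have hS2Mh : (Vᴴ*M*V + Wᴴ*M*W).IsHermitian :=
    (isHermitian_conjTranspose_mul_mul V hM.1).add (isHermitian_conjTranspose_mul_mul W hM.1)
  -- the contraction constant c0
  obtain ⟨t, ht, htPSD⟩ := dominate hc hM.1
  set t' : ℝ := max t 1 with ht'def
  have ht'1 : (1:ℝ) ≤ t' := le_max_right _ _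
  have ht'0 : (0:ℝ) < t' := lt_of_lt_of_le one_pos ht'1
  have htt' : t ≤ t' := le_max_left _ _
  have ht'PSD : ((t' : ℂ) • ((M - (Vᴴ*M*V + Wᴴ*M*W)) - (Uᴴ*M*U + Bᴴ*M*B)) - M).PosSemidef := by
    have e : (t' : ℂ) • ((M - (Vᴴ*M*V + Wᴴ*M*W)) - (Uᴴ*M*U + Bᴴ*M*B)) - M
        = ((t : ℂ) • ((M - (Vᴴ*M*V + Wᴴ*M*W)) - (Uᴴ*M*U + Bᴴ*M*B)) - M)
          + ((t' - t : ℝ) : ℂ) • ((M - (Vᴴ*M*V + Wᴴ*M*W)) - (Uᴴ*M*U + Bᴴ*M*B)) := by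
      push_cast
      module
    rw [e]
    exact htPSD.add (smulPSD (by linarith) hc.posSemidef)
  set c0 : ℝ := 1 - 1/t' with hc0def
  have hc00 : 0 ≤ c0 := by
    have : 1/t' ≤ 1 := by
      rw [div_le_one ht'0]
      exact ht'1
    simp only [hc0def]
    linarith
  have hc01 : c0 < 1 := by
    have : 0 < 1/t' := by positivity
    simp only [hc0def]
    linarith
  have hinv : ((1/t' : ℝ) : ℂ) * ((t' : ℝ) : ℂ) = 1 := by
    have h : (1/t') * t' = 1 := one_div_mul_cancel ht'0.ne'
    exact_mod_cast congrArg Complex.ofReal h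
  have hshrink : ((c0 : ℂ) • M - ((Uᴴ*M*U + Bᴴ*M*B) + (Vᴴ*M*V + Wᴴ*M*W))).PosSemidef := by
    have e : (c0 : ℂ) • M - ((Uᴴ*M*U + Bᴴ*M*B) + (Vᴴ*M*V + Wᴴ*M*W))
        = ((1/t' : ℝ) : ℂ) •
          ((t' : ℂ) • ((M - (Vᴴ*M*V + Wᴴ*M*W)) - (Uᴴ*M*U + Bᴴ*M*B)) - M) := by
      rw [smul_sub, smul_smul, hinv, one_smul]
      simp only [hc0def]
      push_cast
      module
    rw [e]
    exact smulPSD (by positivity) ht'PSD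
  -- core bound
  have core : ∀ X : Matrix (Fin N) (Fin N) ℂ, X.IsHermitian → Aᴴ*X*B + Bᴴ*X*A = -Q →
      (X - (Q - (Uᴴ*M*U + Bᴴ*M*B))).PosSemidef ∧
      ((Q + (Vᴴ*M*V + Wᴴ*M*W)) - X).PosSemidef := by
    intro X hXh hXeq
    have hfix : X = Q + ((Vᴴ*X*V + Wᴴ*X*W) - (Uᴴ*X*U + Bᴴ*X*B)) := by
      have h := kid X
      rw [hXeq] at h
      rw [h]
      abel
    have hE1h : (X - (Q - (Uᴴ*M*U + Bᴴ*M*B))).IsHermitian := hXh.sub (hQ.1.sub hS1Mh)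
    have hE2h : ((Q + (Vᴴ*M*V + Wᴴ*M*W)) - X).IsHermitian := (hQ.1.add hS2Mh).sub hXh
    obtain ⟨s1, hs1, hs1PSD⟩ := dominate hM ((hQ.1.sub hS1Mh).sub hXh)
    obtain ⟨s2, hs2, hs2PSD⟩ := dominate hM (hXh.sub (hQ.1.add hS2Mh))
    set s₀ : ℝ := max s1 s2 with hs₀def
    have hs₀0 : 0 ≤ s₀ := le_trans hs1.le (le_max_left _ _)
    have hbase1 : (X - (Q - (Uᴴ*M*U + Bᴴ*M*B)) + (s₀ : ℂ) • M).PosSemidef := by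
      have e : X - (Q - (Uᴴ*M*U + Bᴴ*M*B)) + (s₀ : ℂ) • M
          = ((s1 : ℂ) • M - ((Q - (Uᴴ*M*U + Bᴴ*M*B)) - X)) + ((s₀ - s1 : ℝ) : ℂ) • M := by
        push_cast
        module
      rw [e]
      exact hs1PSD.add (smulPSD (sub_nonneg.mpr (le_max_left _ _)) hM.posSemidef)
    have hbase2 : ((Q + (Vᴴ*M*V + Wᴴ*M*W)) - X + (s₀ : ℂ) • M).PosSemidef := by
      have e : (Q + (Vᴴ*M*V + Wᴴ*M*W)) - X + (s₀ : ℂ) • M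
          = ((s2 : ℂ) • M - (X - (Q + (Vᴴ*M*V + Wᴴ*M*W)))) + ((s₀ - s2 : ℝ) : ℂ) • M := by
        push_cast
        module
      rw [e]
      exact hs2PSD.add (smulPSD (sub_nonneg.mpr (le_max_right _ _)) hM.posSemidef)
    have iter : ∀ n : ℕ,
        (X - (Q - (Uᴴ*M*U + Bᴴ*M*B)) + ((s₀ * c0^n : ℝ) : ℂ) • M).PosSemidef ∧
        ((Q + (Vᴴ*M*V + Wᴴ*M*W)) - X + ((s₀ * c0^n : ℝ) : ℂ) • M).PosSemidef := by
      intro n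
      induction n with
      | zero =>
        constructor
        · simpa using hbase1
        · simpa using hbase2
      | succ n ih =>
        have hstep := step_bound U V W B Q M X c0 hc00 hshrink hd1.posSemidef hd2.posSemidef
          hfix (s₀ * c0^n) (mul_nonneg hs₀0 (pow_nonneg hc00 n)) ih.1 ih.2
        have harith : c0 * (s₀ * c0^n) = s₀ * c0^(n+1) := by ring
        rw [harith] at hstep
        exact hstep
    exact ⟨squeeze hE1h hc00 hc01 hs₀0 (fun n => (iter n).1),
      squeeze hE2h hc00 hc01 hs₀0 (fun n => (iter n).2)⟩
  -- homogeneous uniqueness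
  have uniq0 : ∀ Z : Matrix (Fin N) (Fin N) ℂ, Z.IsHermitian → Aᴴ*Z*B + Bᴴ*Z*A = 0 → Z = 0 := by
    intro Z hZh hZeq
    have hfix : Z = (Vᴴ*Z*V + Wᴴ*Z*W) - (Uᴴ*Z*U + Bᴴ*Z*B) := by
      have h := kid Z
      rw [hZeq] at h
      rw [h]
      abel
    obtain ⟨s1, hs1, hs1PSD⟩ := dominate hM hZh
    obtain ⟨s2, hs2, hs2PSD⟩ := dominate hM hZh.neg
    set s₀ : ℝ := max s1 s2 with hs₀def
    have hs₀0 : 0 ≤ s₀ := le_trans hs1.le (le_max_left _ _)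
    have hbase1 : ((s₀ : ℂ) • M - Z).PosSemidef := by
      have e : (s₀ : ℂ) • M - Z = ((s1 : ℂ) • M - Z) + ((s₀ - s1 : ℝ) : ℂ) • M := by
        push_cast
        module
      rw [e]
      exact hs1PSD.add (smulPSD (sub_nonneg.mpr (le_max_left _ _)) hM.posSemidef)
    have hbase2 : ((s₀ : ℂ) • M + Z).PosSemidef := by
      have e : (s₀ : ℂ) • M + Z = ((s2 : ℂ) • M - (-Z)) + ((s₀ - s2 : ℝ) : ℂ) • M := by
        push_cast
        module
      rw [e]
      exact hs2PSD.add (smulPSD (sub_nonneg.mpr (le_max_right _ _)) hM.posSemidef)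
    have iter : ∀ n : ℕ,
        (((s₀ * c0^n : ℝ) : ℂ) • M - Z).PosSemidef ∧
        (((s₀ * c0^n : ℝ) : ℂ) • M + Z).PosSemidef := by
      intro n
      induction n with
      | zero =>
        constructor
        · simpa using hbase1
        · simpa using hbase2
      | succ n ih =>
        have hstep := step_zero U V W B M Z c0 hshrink hfix (s₀ * c0^n)
          (mul_nonneg hs₀0 (pow_nonneg hc00 n)) ih.1 ih.2
        have harith : c0 * (s₀ * c0^n) = s₀ * c0^(n+1) := by ring
        rw [harith] at hstep
        exact hstep
    have hZpsd : Z.PosSemidef := by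
      refine squeeze (M := M) hZh hc00 hc01 hs₀0 (fun n => ?_)
      have e : Z + ((s₀ * c0^n : ℝ) : ℂ) • M = ((s₀ * c0^n : ℝ) : ℂ) • M + Z := by abel
      rw [e]
      exact (iter n).2
    have hZnpsd : (-Z).PosSemidef := by
      refine squeeze (M := M) hZh.neg hc00 hc01 hs₀0 (fun n => ?_)
      have e : -Z + ((s₀ * c0^n : ℝ) : ℂ) • M = ((s₀ * c0^n : ℝ) : ℂ) • M - Z := by abel
      rw [e]
      exact (iter n).1
    exact psd_neg_eq_zero hZpsd hZnpsd
  -- the linear map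
  let L : Matrix (Fin N) (Fin N) ℂ →ₗ[ℂ] Matrix (Fin N) (Fin N) ℂ :=
    { toFun := fun X => Aᴴ * X * B + Bᴴ * X * A
      map_add' := fun X Y => by
        simp only [Matrix.mul_add, Matrix.add_mul]
        abel
      map_smul' := fun r X => by
        simp only [Matrix.mul_smul, Matrix.smul_mul, smul_add, RingHom.id_apply] }
  have hLapp : ∀ X : Matrix (Fin N) (Fin N) ℂ, L X = Aᴴ * X * B + Bᴴ * X * A := fun _ => rfl
  have hLconj : ∀ Z : Matrix (Fin N) (Fin N) ℂ, L Zᴴ = (L Z)ᴴ := by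
    intro Z
    rw [hLapp, hLapp]
    simp only [conjTranspose_add, conjTranspose_mul, conjTranspose_conjTranspose,
      Matrix.mul_assoc]
    abel
  have hker : ∀ Z : Matrix (Fin N) (Fin N) ℂ, L Z = 0 → Z = 0 := by
    intro Z hZ
    have hZc : L Zᴴ = 0 := by rw [hLconj, hZ, conjTranspose_zero]
    have hH : Z + Zᴴ = 0 := by
      apply uniq0 _ (isHermitian_add_transpose_self Z)
      have h0 : L (Z + Zᴴ) = 0 := by rw [map_add, hZ, hZc, add_zero]
      rw [hLapp] at h0
      exact h0
    have hKherm : (Complex.I • (Z - Zᴴ)).IsHermitian := by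
      show (Complex.I • (Z - Zᴴ))ᴴ = Complex.I • (Z - Zᴴ)
      rw [conjTranspose_smul, conjTranspose_sub, conjTranspose_conjTranspose,
        Complex.star_def, Complex.conj_I]
      module
    have hK : Complex.I • (Z - Zᴴ) = 0 := by
      apply uniq0 _ hKherm
      have h0 : L (Complex.I • (Z - Zᴴ)) = 0 := by
        rw [_root_.map_smul, map_sub, hZ, hZc, sub_zero, smul_zero]
      rw [hLapp] at h0
      exact h0
    have hZK : Z - Zᴴ = 0 := by
      rcases smul_eq_zero.mp hK with h | h
      · exact absurd h Complex.I_ne_zero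
      · exact h
    have h2Z : (2 : ℂ) • Z = 0 := by
      have e : (2 : ℂ) • Z = (Z + Zᴴ) + (Z - Zᴴ) := by module
      rw [e, hH, hZK, add_zero]
    rcases smul_eq_zero.mp h2Z with h | h
    · exact absurd h two_ne_zero
    · exact h
  have hLinj : Function.Injective L := by
    intro Z1 Z2 h12
    have h0 : L (Z1 - Z2) = 0 := by rw [map_sub, h12, sub_self]
    exact sub_eq_zero.mp (hker _ h0)
  have hLsurj : Function.Surjective L := (LinearMap.injective_iff_surjective).mp hLinj
  obtain ⟨X₀, hX₀⟩ := hLsurj (-Q)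
  have hX₀eq : Aᴴ * X₀ * B + Bᴴ * X₀ * A = -Q := by rw [← hLapp]; exact hX₀
  have hX₀h : X₀.IsHermitian := by
    have h1 : L X₀ᴴ = L X₀ := by
      rw [hLconj, hX₀, conjTranspose_neg, hQ.1.eq]
    exact hLinj h1
  have hbounds := core X₀ hX₀h hX₀eq
  have hX₀PD : X₀.PosDef := by
    have e : X₀ = (Q - (Uᴴ*M*U + Bᴴ*M*B)) + (X₀ - (Q - (Uᴴ*M*U + Bᴴ*M*B))) := by abel
    rw [e]
    exact hd1.add_posSemidef hbounds.1
  refine ⟨⟨X₀, ⟨hX₀PD, hX₀eq⟩, ?_⟩, ?_⟩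
  · rintro Y ⟨hYPD, hYeq⟩
    have h0 : L (Y - X₀) = 0 := by
      rw [map_sub]
      rw [hLapp, hLapp, hYeq, hX₀eq, sub_self]
    exact sub_eq_zero.mp (hker _ h0)
  · intro X hXPD hXeq
    exact core X hXPD.isHermitian hXeq
end

section
/- Let A, B be N×N Hermitian matrices and Q Hermitian positive definite. If 2(UQU + BQB) < Q and 2(VQV + WQW) < Q, where U = (A − B + I)/√2, V = (A + B + I)/√2, W = B − I, then the equation AXB + BXA = −Q has exactly one Hermitian positive definite solution X̂, and X̂ satisfies Q − 2(UQU + BQB) ≤ X̂ ≤ Q + 2(VQV + WQW). -/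
open Matrix Filter
open scoped ComplexOrder
set_option linter.unusedSectionVars false
set_option linter.unusedVariables false
set_option maxHeartbeats 1000000

namespace Stmt10Aux

variable {n : Type*} [Fintype n] [DecidableEq n]

/-- Loewner-style relation expressed with `PosSemidef`. -/
def LoeLE (M N : Matrix n n ℂ) : Prop := (N - M).PosSemidef

lemma loeLE_refl (M : Matrix n n ℂ) (h : M.IsHermitian) : LoeLE M M := by
  simpa [LoeLE] using Matrix.PosSemidef.zero

lemma loeLE_trans {M N P : Matrix n n ℂ} (h1 : LoeLE M N) (h2 : LoeLE N P) : LoeLE M P := by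
  have := h1.add h2
  simpa [LoeLE, sub_add_sub_cancel'] using this

lemma loeLE_add {M N M' N' : Matrix n n ℂ} (h1 : LoeLE M N) (h2 : LoeLE M' N') :
    LoeLE (M + M') (N + N') := by
  have := h1.add h2
  have e : N - M + (N' - M') = N + N' - (M + M') := by abel
  rwa [e] at this

lemma loeLE_neg {M N : Matrix n n ℂ} (h : LoeLE M N) : LoeLE (-N) (-M) := by
  have e : N - M = -M - -N := by abel
  rwa [LoeLE, ← e]

lemma psd_smul {M : Matrix n n ℂ} {t : ℝ} (ht : 0 ≤ t) (hM : M.PosSemidef) :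
    ((t : ℂ) • M).PosSemidef := by
  refine Matrix.PosSemidef.of_dotProduct_mulVec_nonneg ?_ (fun x => ?_)
  · show ((t : ℂ) • M)ᴴ = (t : ℂ) • M
    rw [Matrix.conjTranspose_smul, hM.1]
    simp [Complex.star_def, Complex.conj_ofReal]
  · have : star x ⬝ᵥ ((t : ℂ) • M) *ᵥ x = (t : ℂ) * (star x ⬝ᵥ M *ᵥ x) := by
      rw [Matrix.smul_mulVec, dotProduct_smul, smul_eq_mul]
    rw [this]
    exact mul_nonneg (by exact_mod_cast Complex.zero_le_real.2 ht) (hM.dotProduct_mulVec_nonneg x)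

lemma loeLE_smul {M N : Matrix n n ℂ} {t : ℝ} (ht : 0 ≤ t) (h : LoeLE M N) :
    LoeLE ((t : ℂ) • M) ((t : ℂ) • N) := by
  have := psd_smul ht h
  rwa [LoeLE, ← smul_sub]

lemma loeLE_smul_mono {Q : Matrix n n ℂ} {s t : ℝ} (hst : s ≤ t) (hQ : Q.PosSemidef) :
    LoeLE ((s : ℂ) • Q) ((t : ℂ) • Q) := by
  have := psd_smul (t := t - s) (by linarith) hQ
  rwa [LoeLE, show (t : ℂ) • Q - (s : ℂ) • Q = ((t - s : ℝ) : ℂ) • Q by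
    push_cast; rw [sub_smul]]

lemma loeLE_conj {M N : Matrix n n ℂ} (h : LoeLE M N) {C : Matrix n n ℂ}
    (hC : C.IsHermitian) : LoeLE (C * M * C) (C * N * C) := by
  have := h.mul_mul_conjTranspose_same C
  rw [hC.eq] at this
  rwa [LoeLE, show C * N * C - C * M * C = C * (N - M) * C by
    rw [Matrix.mul_sub, Matrix.sub_mul]]

lemma psd_of_add_self {M : Matrix n n ℂ} (hM : M.IsHermitian) (h : (M + M).PosSemidef) :
    M.PosSemidef := by
  refine Matrix.PosSemidef.of_dotProduct_mulVec_nonneg hM (fun x => ?_)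
  have h2 := h.dotProduct_mulVec_nonneg x
  have e : star x ⬝ᵥ (M + M) *ᵥ x = star x ⬝ᵥ M *ᵥ x + star x ⬝ᵥ M *ᵥ x := by
    rw [Matrix.add_mulVec, dotProduct_add]
  rw [e] at h2
  rw [Complex.le_def] at h2 ⊢
  simp only [Complex.add_re, Complex.add_im, Complex.zero_re, Complex.zero_im] at h2 ⊢
  constructor <;> [linarith [h2.1]; linarith [h2.2]]

lemma loeLE_half {M N : Matrix n n ℂ} (hM : M.IsHermitian) (hN : N.IsHermitian)
    (h : LoeLE (M + M) (N + N)) : LoeLE M N := by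
  refine psd_of_add_self (hN.sub hM) ?_
  rwa [LoeLE, show N + N - (M + M) = (N - M) + (N - M) by abel] at h

lemma loeLE_congr {M N M' N' : Matrix n n ℂ} (hM : M = M') (hN : N = N')
    (h : LoeLE M N) : LoeLE M' N' := hM ▸ hN ▸ h

end Stmt10Aux

namespace Stmt10Aux

variable {n : Type*} [Fintype n] [DecidableEq n]

lemma diagonal_const_eq (s : ℂ) :
    Matrix.diagonal (fun _ : n => s) = s • (1 : Matrix n n ℂ) := by
  ext i j
  by_cases h : i = j <;> simp [Matrix.diagonal_apply, Matrix.one_apply, h]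

lemma conj_unitary_diag_psd {X : Matrix n n ℂ} (hX : X.IsHermitian) (f : n → ℝ)
    (hf : ∀ i, 0 ≤ f i) :
    ((Matrix.IsHermitian.eigenvectorUnitary hX : Matrix n n ℂ) *
      Matrix.diagonal (RCLike.ofReal ∘ f) *
      (star (Matrix.IsHermitian.eigenvectorUnitary hX : Matrix n n ℂ))).PosSemidef := by
  have hdiag : (Matrix.diagonal (RCLike.ofReal ∘ f) : Matrix n n ℂ).PosSemidef := by
    rw [Matrix.posSemidef_diagonal_iff]
    intro i
    simpa using (RCLike.ofReal_nonneg (K := ℂ)).2 (hf i)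
  have := hdiag.mul_mul_conjTranspose_same
    (Matrix.IsHermitian.eigenvectorUnitary hX : Matrix n n ℂ)
  rwa [Matrix.star_eq_conjTranspose]

lemma spectral_add (X : Matrix n n ℂ) (hX : X.IsHermitian) (g : n → ℝ) :
    X + (Matrix.IsHermitian.eigenvectorUnitary hX : Matrix n n ℂ) *
        Matrix.diagonal (RCLike.ofReal ∘ g) *
        (star (Matrix.IsHermitian.eigenvectorUnitary hX : Matrix n n ℂ)) =
      (Matrix.IsHermitian.eigenvectorUnitary hX : Matrix n n ℂ) *
        Matrix.diagonal (RCLike.ofReal ∘ (fun i => hX.eigenvalues i + g i)) *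
        (star (Matrix.IsHermitian.eigenvectorUnitary hX : Matrix n n ℂ)) := by
  calc X + (Matrix.IsHermitian.eigenvectorUnitary hX : Matrix n n ℂ) *
        Matrix.diagonal (RCLike.ofReal ∘ g) *
        (star (Matrix.IsHermitian.eigenvectorUnitary hX : Matrix n n ℂ))
      = (Matrix.IsHermitian.eigenvectorUnitary hX : Matrix n n ℂ) *
        Matrix.diagonal (RCLike.ofReal ∘ hX.eigenvalues) *
        (star (Matrix.IsHermitian.eigenvectorUnitary hX : Matrix n n ℂ)) +
        (Matrix.IsHermitian.eigenvectorUnitary hX : Matrix n n ℂ) *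
        Matrix.diagonal (RCLike.ofReal ∘ g) *
        (star (Matrix.IsHermitian.eigenvectorUnitary hX : Matrix n n ℂ)) := by
        exact congrArg (fun M => M + _) hX.spectral_theorem
    _ = _ := by
        rw [← Matrix.add_mul, ← Matrix.mul_add, Matrix.diagonal_add]
        have e : (fun i => (RCLike.ofReal ∘ hX.eigenvalues) i + (RCLike.ofReal ∘ g) i : n → ℂ) =
            RCLike.ofReal ∘ fun i => hX.eigenvalues i + g i := by
          funext i; simp
        rw [e]

lemma smul_one_eq_conj (X : Matrix n n ℂ) (hX : X.IsHermitian) (s : ℝ) :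
    (s : ℂ) • (1 : Matrix n n ℂ) =
      (Matrix.IsHermitian.eigenvectorUnitary hX : Matrix n n ℂ) *
        Matrix.diagonal (RCLike.ofReal ∘ (fun _ : n => s)) *
        (star (Matrix.IsHermitian.eigenvectorUnitary hX : Matrix n n ℂ)) := by
  have h1 : (Matrix.IsHermitian.eigenvectorUnitary hX : Matrix n n ℂ) *
      star (Matrix.IsHermitian.eigenvectorUnitary hX : Matrix n n ℂ) = 1 :=
    (Matrix.mem_unitaryGroup_iff).mp (Matrix.IsHermitian.eigenvectorUnitary hX).2
  have h2 : Matrix.diagonal (RCLike.ofReal ∘ (fun _ : n => s)) =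
      (s : ℂ) • (1 : Matrix n n ℂ) := by
    simpa [Function.comp_def] using diagonal_const_eq (n := n) (s : ℂ)
  rw [h2, Matrix.mul_smul, Matrix.mul_one, Matrix.smul_mul, h1]

lemma exists_loeLE_smul_one {X : Matrix n n ℂ} (hX : X.IsHermitian) :
    ∃ t : ℝ, 0 ≤ t ∧ LoeLE X ((t : ℂ) • 1) ∧ LoeLE (-((t : ℂ) • 1)) X := by
  set t := ∑ i, |hX.eigenvalues i| with ht
  have htn : 0 ≤ t := Finset.sum_nonneg fun i _ => abs_nonneg _
  have hbd : ∀ i, |hX.eigenvalues i| ≤ t := fun i =>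
    Finset.single_le_sum (f := fun i => |hX.eigenvalues i|) (fun j _ => abs_nonneg _) (Finset.mem_univ i)
  refine ⟨t, htn, ?_, ?_⟩
  · have h1 := spectral_add X hX (fun i => -hX.eigenvalues i + t)
    have h2 : (fun i => hX.eigenvalues i + (-hX.eigenvalues i + t)) = fun _ : n => t := by
      funext i; ring
    rw [h2, ← smul_one_eq_conj X hX t] at h1
    have h3 : (t : ℂ) • (1 : Matrix n n ℂ) - X =
        (Matrix.IsHermitian.eigenvectorUnitary hX : Matrix n n ℂ) *
          Matrix.diagonal (RCLike.ofReal ∘ (fun i => -hX.eigenvalues i + t)) *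
          (star (Matrix.IsHermitian.eigenvectorUnitary hX : Matrix n n ℂ)) := by
      rw [← h1]; abel
    rw [LoeLE, h3]
    exact conj_unitary_diag_psd hX _ (fun i => by
      have := hbd i
      have := neg_abs_le (hX.eigenvalues i)
      have := le_abs_self (hX.eigenvalues i)
      linarith)
  · have h1 := spectral_add X hX (fun _ => t)
    have h3 : X - -((t : ℂ) • (1 : Matrix n n ℂ)) =
        (Matrix.IsHermitian.eigenvectorUnitary hX : Matrix n n ℂ) *
          Matrix.diagonal (RCLike.ofReal ∘ (fun i => hX.eigenvalues i + t)) *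
          (star (Matrix.IsHermitian.eigenvectorUnitary hX : Matrix n n ℂ)) := by
      rw [← h1, ← smul_one_eq_conj X hX t]; abel
    rw [LoeLE, h3]
    exact conj_unitary_diag_psd hX _ (fun i => by
      have := hbd i
      have := neg_abs_le (hX.eigenvalues i)
      linarith)

end Stmt10Aux

namespace Stmt10Aux

variable {n : Type*} [Fintype n] [DecidableEq n]

lemma posDef_exists_smul_one_le {M : Matrix n n ℂ} (hM : M.PosDef) :
    ∃ δ : ℝ, 0 < δ ∧ LoeLE ((δ : ℂ) • 1) M := by
  cases isEmpty_or_nonempty n with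
  | inl h =>
    refine ⟨1, one_pos, Matrix.PosSemidef.of_dotProduct_mulVec_nonneg (Matrix.ext fun i => isEmptyElim i) fun x => by simp [dotProduct]⟩
  | inr h =>
    set δ := Finset.univ.inf' Finset.univ_nonempty hM.1.eigenvalues with hδdef
    have hδpos : 0 < δ := by
      rw [hδdef, Finset.lt_inf'_iff]
      exact fun i _ => hM.eigenvalues_pos i
    refine ⟨δ, hδpos, ?_⟩
    have h1 := spectral_add M hM.1 (fun _ => -δ)
    have h2 := smul_one_eq_conj M hM.1 (-δ)
    have h3 : M - (δ : ℂ) • 1 =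
        (Matrix.IsHermitian.eigenvectorUnitary hM.1 : Matrix n n ℂ) *
          Matrix.diagonal (RCLike.ofReal ∘ (fun i => hM.1.eigenvalues i + -δ)) *
          (star (Matrix.IsHermitian.eigenvectorUnitary hM.1 : Matrix n n ℂ)) := by
      rw [← h1, ← h2]
      push_cast
      rw [neg_smul]
      abel
    rw [LoeLE, h3]
    exact conj_unitary_diag_psd hM.1 _ (fun i => by
      have : δ ≤ hM.1.eigenvalues i := Finset.inf'_le _ (Finset.mem_univ i)
      linarith)

lemma smul_smul_c (s t : ℝ) (M : Matrix n n ℂ) :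
    (s : ℂ) • ((t : ℂ) • M) = ((s * t : ℝ) : ℂ) • M := by
  rw [smul_smul]; norm_cast

lemma exists_smul_posdef_le {M Q : Matrix n n ℂ} (hM : M.PosDef) (hQ : Q.IsHermitian) :
    ∃ ε : ℝ, 0 < ε ∧ LoeLE ((ε : ℂ) • Q) M := by
  obtain ⟨δ, hδ, h1⟩ := posDef_exists_smul_one_le hM
  obtain ⟨μ, hμ, h2, -⟩ := exists_loeLE_smul_one hQ
  refine ⟨δ / (μ + 1), by positivity, ?_⟩
  have h2' : LoeLE Q (((μ + 1 : ℝ) : ℂ) • (1 : Matrix n n ℂ)) :=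
    loeLE_trans h2 (loeLE_smul_mono (by linarith)
      (Matrix.PosSemidef.one : (1 : Matrix n n ℂ).PosSemidef))
  have h3 := loeLE_smul (t := δ / (μ + 1)) (by positivity) h2'
  rw [smul_smul_c, div_mul_cancel₀ _ (by positivity : (μ + 1 : ℝ) ≠ 0)] at h3
  exact loeLE_trans h3 h1

lemma exists_bound_rel {Q Z : Matrix n n ℂ} (hQ : Q.PosDef) (hZ : Z.IsHermitian) :
    ∃ t : ℝ, 0 ≤ t ∧ LoeLE (-((t : ℂ) • Q)) Z ∧ LoeLE Z ((t : ℂ) • Q) := by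
  obtain ⟨δ, hδ, h1⟩ := posDef_exists_smul_one_le hQ
  obtain ⟨μ, hμ, hZu, hZl⟩ := exists_loeLE_smul_one hZ
  have hone : LoeLE (1 : Matrix n n ℂ) (((δ⁻¹ : ℝ) : ℂ) • Q) := by
    have := loeLE_smul (t := δ⁻¹) (by positivity) h1
    rwa [smul_smul_c, inv_mul_cancel₀ (ne_of_gt hδ), Complex.ofReal_one, one_smul] at this
  have h4 : LoeLE ((μ : ℂ) • (1 : Matrix n n ℂ)) (((μ * δ⁻¹ : ℝ) : ℂ) • Q) := by
    have := loeLE_smul (t := μ) hμ hone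
    rwa [smul_smul_c] at this
  exact ⟨μ * δ⁻¹, by positivity, loeLE_trans (loeLE_neg h4) hZl, loeLE_trans hZu h4⟩

lemma loeLE_zero_limit {Q M : Matrix n n ℂ} (hQpsd : Q.PosSemidef) (hM : M.IsHermitian)
    (h : ∀ ε : ℝ, 0 < ε → LoeLE M ((ε : ℂ) • Q)) : LoeLE M 0 := by
  refine Matrix.PosSemidef.of_dotProduct_mulVec_nonneg (by rw [Matrix.IsHermitian, Matrix.conjTranspose_sub, Matrix.conjTranspose_zero, hM.eq])
    (fun x => ?_)
  set a := star x ⬝ᵥ M *ᵥ x with ha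
  set b := star x ⬝ᵥ Q *ᵥ x with hb
  have hbpos := hQpsd.dotProduct_mulVec_nonneg x
  rw [← hb] at hbpos
  have key : ∀ ε : ℝ, 0 < ε → a ≤ (ε : ℂ) * b := by
    intro ε hε
    have := (h ε hε).dotProduct_mulVec_nonneg x
    have e : star x ⬝ᵥ ((ε : ℂ) • Q - M) *ᵥ x = (ε : ℂ) * b - a := by
      rw [Matrix.sub_mulVec, dotProduct_sub, Matrix.smul_mulVec, dotProduct_smul,
        smul_eq_mul, ← ha, ← hb]
    rw [e] at this
    exact sub_nonneg.mp this
  have hbim : b.im = 0 := ((Complex.le_def).1 hbpos).2.symm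
  have hbre : 0 ≤ b.re := ((Complex.le_def).1 hbpos).1
  have haim : a.im = 0 := by
    have := (Complex.le_def).1 (key 1 one_pos)
    simpa [Complex.mul_im, hbim] using this.2
  have hare : ∀ ε : ℝ, 0 < ε → a.re ≤ ε * b.re := by
    intro ε hε
    have := ((Complex.le_def).1 (key ε hε)).1
    simpa [Complex.mul_re, hbim] using this
  have hareneg : a.re ≤ 0 := by
    by_contra hpos
    push_neg at hpos
    have hε : 0 < a.re / (b.re + 1) := by positivity
    have h5 := hare _ hε
    have h6 : a.re / (b.re + 1) * b.re < a.re / (b.re + 1) * (b.re + 1) :=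
      mul_lt_mul_of_pos_left (by linarith) hε
    rw [div_mul_cancel₀ _ (by linarith : b.re + 1 ≠ 0)] at h6
    linarith
  have e2 : star x ⬝ᵥ (0 - M) *ᵥ x = -a := by
    rw [zero_sub, Matrix.neg_mulVec, dotProduct_neg, ← ha]
  rw [e2, Complex.le_def]
  constructor
  · simpa using hareneg
  · simp [haim]

lemma eq_zero_of_psd_neg_psd {M : Matrix n n ℂ} (h1 : M.PosSemidef)
    (h2 : (-M).PosSemidef) : M = 0 := by
  have hz : ∀ x, M *ᵥ x = 0 := by
    intro x
    refine (h1.dotProduct_mulVec_zero_iff x).1 (le_antisymm ?_ (h1.dotProduct_mulVec_nonneg x))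
    have := h2.dotProduct_mulVec_nonneg x
    rw [Matrix.neg_mulVec, dotProduct_neg] at this
    exact neg_nonneg.mp this
  ext i j
  have := congrFun (hz (Pi.single j 1)) i
  rw [Matrix.mulVec_single] at this
  simpa using this

end Stmt10Aux

namespace Stmt10Aux

variable {n : Type*} [Fintype n] [DecidableEq n]

lemma loeLE_two_nsmul {M N : Matrix n n ℂ} (h : LoeLE M N) : LoeLE (2 • M) (2 • N) := by
  rw [two_smul, two_smul]
  exact loeLE_add h h

lemma qmap_mono {C D X Y : Matrix n n ℂ} (hC : C.IsHermitian) (hD : D.IsHermitian)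
    (h : LoeLE X Y) : LoeLE (2 • (C * X * C + D * X * D)) (2 • (C * Y * C + D * Y * D)) :=
  loeLE_two_nsmul (loeLE_add (loeLE_conj h hC) (loeLE_conj h hD))

lemma qmap_psd {C D X : Matrix n n ℂ} (hC : C.IsHermitian) (hD : D.IsHermitian)
    (hX : X.PosSemidef) : (2 • (C * X * C + D * X * D)).PosSemidef := by
  have h1 := hX.mul_mul_conjTranspose_same C
  have h2 := hX.mul_mul_conjTranspose_same D
  rw [hC.eq] at h1
  rw [hD.eq] at h2
  rw [two_smul]
  exact (h1.add h2).add (h1.add h2)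

lemma qmap_hadd (C D X Y : Matrix n n ℂ) :
    2 • (C * (X + Y) * C + D * (X + Y) * D) =
      2 • (C * X * C + D * X * D) + 2 • (C * Y * C + D * Y * D) := by
  simp only [Matrix.mul_add, Matrix.add_mul, smul_add]
  abel

lemma qmap_hsmul (C D X : Matrix n n ℂ) (c : ℂ) :
    2 • (C * (c • X) * C + D * (c • X) * D) = c • (2 • (C * X * C + D * X * D)) := by
  simp only [Matrix.mul_smul, Matrix.smul_mul, ← smul_add]
  rw [smul_comm]

lemma herm_conj {C X : Matrix n n ℂ} (hC : C.IsHermitian) (hX : X.IsHermitian) :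
    (C * X * C).IsHermitian := by
  show (C * X * C)ᴴ = C * X * C
  rw [Matrix.conjTranspose_mul, Matrix.conjTranspose_mul, hC.eq, hX.eq, ← Matrix.mul_assoc]

lemma qmap_herm {C D X : Matrix n n ℂ} (hC : C.IsHermitian) (hD : D.IsHermitian)
    (hX : X.IsHermitian) : (2 • (C * X * C + D * X * D)).IsHermitian := by
  rw [two_smul]
  exact ((herm_conj hC hX).add (herm_conj hD hX)).add
    ((herm_conj hC hX).add (herm_conj hD hX))

lemma add_smul_c (a b : ℝ) (Q : Matrix n n ℂ) :
    ((a : ℝ) : ℂ) • Q + ((b : ℝ) : ℂ) • Q = ((a + b : ℝ) : ℂ) • Q := by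
  push_cast
  rw [← add_smul]

lemma key_identity (A B U V W : Matrix n n ℂ)
    (hU : U = ((Real.sqrt 2 : ℂ))⁻¹ • (A - B + 1))
    (hV : V = ((Real.sqrt 2 : ℂ))⁻¹ • (A + B + 1))
    (hW : W = B - 1) (X : Matrix n n ℂ) :
    2 • (V * X * V + W * X * W) - 2 • (U * X * U + B * X * B)
      = 2 • (A * X * B + B * X * A + X) := by
  have hc : ((Real.sqrt 2 : ℂ))⁻¹ * ((Real.sqrt 2 : ℂ))⁻¹ = (2 : ℂ)⁻¹ := by
    have e : ((Real.sqrt 2 : ℝ) : ℂ) * ((Real.sqrt 2 : ℝ) : ℂ) = (2 : ℂ) := by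
      norm_cast
      exact_mod_cast Real.mul_self_sqrt (by norm_num)
    rw [← mul_inv, e]
  subst hU hV hW
  simp only [two_smul, Matrix.smul_mul, Matrix.mul_smul, smul_smul, hc]
  simp only [Matrix.add_mul, Matrix.mul_add, Matrix.sub_mul, Matrix.mul_sub,
    Matrix.one_mul, Matrix.mul_one, smul_add, smul_sub]
  module

end Stmt10Aux

namespace Stmt10Aux

variable {n : Type*} [Fintype n] [DecidableEq n]

lemma loeLE_neg_smul {Q M : Matrix n n ℂ} (t γ : ℝ) (ht : 0 ≤ t)
    (h : LoeLE M ((γ : ℂ) • Q)) :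
    LoeLE (((-(t * γ) : ℝ) : ℂ) • Q) (((-t : ℝ) : ℂ) • M) := by
  have e : ((-t : ℝ) : ℂ) • M - ((-(t * γ) : ℝ) : ℂ) • Q
      = (t : ℂ) • (((γ : ℝ) : ℂ) • Q - M) := by
    push_cast
    module
  rw [LoeLE, e]
  exact psd_smul ht h

end Stmt10Aux

open Stmt10Aux

theorem stmt10 {N : ℕ} (A B Q : Matrix (Fin N) (Fin N) ℂ)
    (hA : A.IsHermitian) (hB : B.IsHermitian) (hQ : Q.PosDef)
    (U V W : Matrix (Fin N) (Fin N) ℂ)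
    (hU : U = ((Real.sqrt 2 : ℂ))⁻¹ • (A - B + 1))
    (hV : V = ((Real.sqrt 2 : ℂ))⁻¹ • (A + B + 1))
    (hW : W = B - 1)
    (hb : (Q - 2 • (U * Q * U + B * Q * B)).PosDef)
    (hc : (Q - 2 • (V * Q * V + W * Q * W)).PosDef) :
    (∃! X : Matrix (Fin N) (Fin N) ℂ, X.PosDef ∧ A * X * B + B * X * A = -Q) ∧
    ∀ X : Matrix (Fin N) (Fin N) ℂ, X.PosDef → A * X * B + B * X * A = -Q →
      (X - (Q - 2 • (U * Q * U + B * Q * B))).PosSemidef ∧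
      ((Q + 2 • (V * Q * V + W * Q * W)) - X).PosSemidef := by
  classical
  -- Hermitian facts
  have hstar : star ((Real.sqrt 2 : ℂ))⁻¹ = ((Real.sqrt 2 : ℂ))⁻¹ := by
    simp [Complex.star_def, map_inv₀, Complex.conj_ofReal]
  have hU' : U.IsHermitian := by
    rw [hU]
    show (_ • _)ᴴ = _
    rw [Matrix.conjTranspose_smul, Matrix.conjTranspose_add, Matrix.conjTranspose_sub,
      Matrix.conjTranspose_one, hA.eq, hB.eq, hstar]
  have hV' : V.IsHermitian := by
    rw [hV]
    show (_ • _)ᴴ = _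
    rw [Matrix.conjTranspose_smul, Matrix.conjTranspose_add, Matrix.conjTranspose_add,
      Matrix.conjTranspose_one, hA.eq, hB.eq, hstar]
  have hW' : W.IsHermitian := by
    rw [hW]
    exact hB.sub (Matrix.isHermitian_one)
  have hQh : Q.IsHermitian := hQ.1
  have hQpsd : Q.PosSemidef := hQ.posSemidef
  -- basic facts about the two positive maps at Q
  have hPhiQ_le_Q : LoeLE (2 • (U * Q * U + B * Q * B)) Q := hb.posSemidef
  have hPsiQ_le_Q : LoeLE (2 • (V * Q * V + W * Q * W)) Q := hc.posSemidef
  have hPhiQ_psd : (2 • (U * Q * U + B * Q * B)).PosSemidef := qmap_psd hU' hB hQpsd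
  have hPsiQ_psd : (2 • (V * Q * V + W * Q * W)).PosSemidef := qmap_psd hV' hW' hQpsd
  have hPhiQ_herm : (2 • (U * Q * U + B * Q * B)).IsHermitian := qmap_herm hU' hB hQh
  have hPsiQ_herm : (2 • (V * Q * V + W * Q * W)).IsHermitian := qmap_herm hV' hW' hQh
  -- contraction coefficients
  obtain ⟨ε₁, hε₁, hε₁le⟩ := exists_smul_posdef_le hb hQh
  obtain ⟨ε₂, hε₂, hε₂le⟩ := exists_smul_posdef_le hc hQh
  set α : ℝ := 1 - ε₁ with hαdef
  set β : ℝ := 1 - ε₂ with hβdef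
  have hα1 : α < 1 := by simp [hαdef]; linarith
  have hβ1 : β < 1 := by simp [hβdef]; linarith
  have hPhiα : LoeLE (2 • (U * Q * U + B * Q * B)) ((α : ℂ) • Q) := by
    have e : ((α : ℝ) : ℂ) • Q - 2 • (U * Q * U + B * Q * B)
        = (Q - 2 • (U * Q * U + B * Q * B)) - ((ε₁ : ℝ) : ℂ) • Q := by
      rw [hαdef]; push_cast; module
    rw [LoeLE, e]
    exact hε₁le
  have hPsiβ : LoeLE (2 • (V * Q * V + W * Q * W)) ((β : ℂ) • Q) := by
    have e : ((β : ℝ) : ℂ) • Q - 2 • (V * Q * V + W * Q * W)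
        = (Q - 2 • (V * Q * V + W * Q * W)) - ((ε₂ : ℝ) : ℂ) • Q := by
      rw [hβdef]; push_cast; module
    rw [LoeLE, e]
    exact hε₂le
  set c : ℝ := max ((α + β) / 2) 0 with hcdef
  have hc0 : 0 ≤ c := le_max_right _ _
  have hc1 : c < 1 := max_lt (by linarith) one_pos
  have hcsum : ∀ t : ℝ, 0 ≤ t → t * β + t * α ≤ c * t + c * t := by
    intro t ht
    have h1 : (α + β) / 2 ≤ c := le_max_left _ _
    nlinarith
  -- upper/lower bounds for the positive maps applied to bounded matrices
  have hup : ∀ (C D : Matrix (Fin N) (Fin N) ℂ), C.IsHermitian → D.IsHermitian →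
      ∀ (γ t : ℝ), 0 ≤ t → LoeLE (2 • (C * Q * C + D * Q * D)) ((γ : ℂ) • Q) →
      ∀ Xm : Matrix (Fin N) (Fin N) ℂ, LoeLE Xm ((t : ℂ) • Q) →
        LoeLE (2 • (C * Xm * C + D * Xm * D)) (((t * γ : ℝ) : ℂ) • Q) := by
    intro C D hC hD γ t ht hγ Xm hXm
    have h1 := qmap_mono (X := Xm) (Y := (t : ℂ) • Q) hC hD hXm
    rw [qmap_hsmul] at h1
    have h2 := loeLE_smul (t := t) ht hγ
    rw [smul_smul_c] at h2
    exact loeLE_trans h1 h2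
  have hlo : ∀ (C D : Matrix (Fin N) (Fin N) ℂ), C.IsHermitian → D.IsHermitian →
      ∀ (γ t : ℝ), 0 ≤ t → LoeLE (2 • (C * Q * C + D * Q * D)) ((γ : ℂ) • Q) →
      ∀ Xm : Matrix (Fin N) (Fin N) ℂ, LoeLE (((-t : ℝ) : ℂ) • Q) Xm →
        LoeLE (((-(t * γ) : ℝ) : ℂ) • Q) (2 • (C * Xm * C + D * Xm * D)) := by
    intro C D hC hD γ t ht hγ Xm hXm
    have h1 := qmap_mono (X := ((-t : ℝ) : ℂ) • Q) (Y := Xm) hC hD hXm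
    rw [qmap_hsmul] at h1
    have h2 := loeLE_neg_smul (Q := Q) t γ ht hγ
    exact loeLE_trans h2 h1
  -- the core rigidity statement for Hermitian solutions of the homogeneous equation
  have core : ∀ D : Matrix (Fin N) (Fin N) ℂ, D.IsHermitian →
      A * D * B + B * D * A = 0 → D = 0 := by
    intro D hD hDeq
    have hkey := key_identity A B U V W hU hV hW D
    rw [hDeq, zero_add] at hkey
    obtain ⟨t₀, ht₀, hl₀, hu₀⟩ := exists_bound_rel hQ hD
    have hl₀' : LoeLE (((-t₀ : ℝ) : ℂ) • Q) D := by
      refine loeLE_congr ?_ rfl hl₀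
      push_cast
      module
    have step : ∀ t : ℝ, 0 ≤ t → LoeLE (((-t : ℝ) : ℂ) • Q) D → LoeLE D ((t : ℂ) • Q) →
        LoeLE (((-(c * t) : ℝ) : ℂ) • Q) D ∧ LoeLE D (((c * t : ℝ) : ℂ) • Q) := by
      intro t ht hdl hdu
      have hΦu := hup U B hU' hB α t ht hPhiα D hdu
      have hΦl := hlo U B hU' hB α t ht hPhiα D hdl
      have hΨu := hup V W hV' hW' β t ht hPsiβ D hdu
      have hΨl := hlo V W hV' hW' β t ht hPsiβ D hdl
      have hermct : (((c * t : ℝ) : ℂ) • Q).IsHermitian := by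
        show _ = _
        rw [Matrix.conjTranspose_smul, hQh.eq]
        simp [Complex.star_def, Complex.conj_ofReal]
      have hermnct : ((((-(c * t)) : ℝ) : ℂ) • Q).IsHermitian := by
        show _ = _
        rw [Matrix.conjTranspose_smul, hQh.eq]
        simp [Complex.star_def, Complex.conj_ofReal]
      constructor
      · -- lower bound
        refine loeLE_half hermnct hD ?_
        have h1 : LoeLE ((((-(t * β)) : ℝ) : ℂ) • Q + (((-(t * α)) : ℝ) : ℂ) • Q) (D + D) := by
          have h2 := loeLE_add hΨl (loeLE_neg hΦu)
          refine loeLE_congr ?_ ?_ h2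
          · push_cast; module
          · rw [← sub_eq_add_neg, hkey, two_smul]
        refine loeLE_trans ?_ h1
        rw [add_smul_c, add_smul_c]
        refine loeLE_smul_mono ?_ hQpsd
        have := hcsum t ht
        linarith
      · -- upper bound
        refine loeLE_half hD hermct ?_
        have h1 : LoeLE (D + D) (((t * β : ℝ) : ℂ) • Q + ((t * α : ℝ) : ℂ) • Q) := by
          have h2 := loeLE_add hΨu (loeLE_neg hΦl)
          refine loeLE_congr ?_ ?_ h2
          · rw [← sub_eq_add_neg, hkey, two_smul]
          · push_cast; module
        refine loeLE_trans h1 ?_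
        rw [add_smul_c, add_smul_c]
        refine loeLE_smul_mono ?_ hQpsd
        have := hcsum t ht
        linarith
    have iter : ∀ k : ℕ, LoeLE (((-(c ^ k * t₀) : ℝ) : ℂ) • Q) D ∧
        LoeLE D (((c ^ k * t₀ : ℝ) : ℂ) • Q) := by
      intro k
      induction k with
      | zero =>
        constructor
        · refine loeLE_congr ?_ rfl hl₀'
          norm_num
        · refine loeLE_congr rfl ?_ hu₀
          norm_num
      | succ k ih =>
        have h := step (c ^ k * t₀) (by positivity) ih.1 ih.2
        constructor
        · refine loeLE_congr ?_ rfl h.1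
          ring_nf
        · refine loeLE_congr rfl ?_ h.2
          ring_nf
    have keps : ∀ ε : ℝ, 0 < ε → ∃ k : ℕ, c ^ k * t₀ ≤ ε := by
      intro ε hε
      obtain ⟨k, hk⟩ := exists_pow_lt_of_lt_one (show (0:ℝ) < ε / (t₀ + 1) by positivity) hc1
      refine ⟨k, ?_⟩
      have h1 : c ^ k * t₀ ≤ (ε / (t₀ + 1)) * (t₀ + 1) := by
        have h2 : (0:ℝ) ≤ c ^ k := by positivity
        nlinarith
      rwa [div_mul_cancel₀ _ (by positivity : t₀ + 1 ≠ 0)] at h1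
    have hDub : LoeLE D 0 := by
      refine loeLE_zero_limit hQpsd hD ?_
      intro ε hε
      obtain ⟨k, hk⟩ := keps ε hε
      exact loeLE_trans (iter k).2 (loeLE_smul_mono hk hQpsd)
    have hDlb : LoeLE (-D) 0 := by
      refine loeLE_zero_limit hQpsd hD.neg ?_
      intro ε hε
      obtain ⟨k, hk⟩ := keps ε hε
      have := loeLE_neg (iter k).1
      have h3 : LoeLE (-D) (((c ^ k * t₀ : ℝ) : ℂ) • Q) := by
        refine loeLE_congr rfl ?_ this
        push_cast
        module
      exact loeLE_trans h3 (loeLE_smul_mono hk hQpsd)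
    have h1 : (-D).PosSemidef := by
      have := hDub
      rw [LoeLE, zero_sub] at this
      exact this
    have h2 : D.PosSemidef := by
      have := hDlb
      rw [LoeLE, zero_sub, neg_neg] at this
      exact this
    exact eq_zero_of_psd_neg_psd h2 h1
  -- injectivity of the Sylvester-type operator on all matrices
  have herm_real_smul : ∀ (t : ℝ) (M : Matrix (Fin N) (Fin N) ℂ), M.IsHermitian →
      (((t : ℝ) : ℂ) • M).IsHermitian := by
    intro t M hM
    show _ = _
    rw [Matrix.conjTranspose_smul, hM.eq]
    simp [Complex.star_def, Complex.conj_ofReal]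
  have inj : ∀ D : Matrix (Fin N) (Fin N) ℂ, A * D * B + B * D * A = 0 → D = 0 := by
    intro D hDeq
    have hadj : A * Dᴴ * B + B * Dᴴ * A = 0 := by
      have h0 := congrArg Matrix.conjTranspose hDeq
      simp only [Matrix.conjTranspose_add, Matrix.conjTranspose_mul, Matrix.conjTranspose_zero,
        hA.eq, hB.eq] at h0
      have e : A * Dᴴ * B + B * Dᴴ * A = B * (Dᴴ * A) + A * (Dᴴ * B) := by noncomm_ring
      rw [e, ← h0]
    have hH : D + Dᴴ = 0 := by
      refine core (D + Dᴴ) ?_ ?_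
      · show _ = _
        rw [Matrix.conjTranspose_add, Matrix.conjTranspose_conjTranspose, add_comm]
      · have e : A * (D + Dᴴ) * B + B * (D + Dᴴ) * A
            = (A * D * B + B * D * A) + (A * Dᴴ * B + B * Dᴴ * A) := by noncomm_ring
        rw [e, hDeq, hadj, add_zero]
    have hK : Complex.I • (D - Dᴴ) = 0 := by
      refine core (Complex.I • (D - Dᴴ)) ?_ ?_
      · show _ = _
        rw [Matrix.conjTranspose_smul, Matrix.conjTranspose_sub,
          Matrix.conjTranspose_conjTranspose, Complex.star_def, Complex.conj_I]
        module
      · have e : A * (Complex.I • (D - Dᴴ)) * B + B * (Complex.I • (D - Dᴴ)) * A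
            = Complex.I • ((A * D * B + B * D * A) - (A * Dᴴ * B + B * Dᴴ * A)) := by
          simp only [Matrix.mul_smul, Matrix.smul_mul, ← smul_add, ← smul_sub]
          congr 1
          noncomm_ring
        rw [e, hDeq, hadj, sub_zero, smul_zero]
    have hK' : D - Dᴴ = 0 := by
      rcases smul_eq_zero.mp hK with h | h
      · exact absurd h Complex.I_ne_zero
      · exact h
    have h2 : D + D = 0 := by
      calc D + D = (D + Dᴴ) + (D - Dᴴ) := by abel
        _ = 0 + 0 := by rw [hH, hK']
        _ = 0 := by simp
    have h3 : (2 : ℂ) • D = 0 := by rw [two_smul]; exact h2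
    rcases smul_eq_zero.mp h3 with h | h
    · exact absurd h two_ne_zero
    · exact h
  -- the linear operator and existence of a solution
  let f : Matrix (Fin N) (Fin N) ℂ →ₗ[ℂ] Matrix (Fin N) (Fin N) ℂ :=
    { toFun := fun X => A * X * B + B * X * A
      map_add' := by intro X Y; noncomm_ring
      map_smul' := by
        intro m X
        simp only [Matrix.mul_smul, Matrix.smul_mul, smul_add, RingHom.id_apply] }
  have hfapp : ∀ X, f X = A * X * B + B * X * A := fun X => rfl
  have hfinj : Function.Injective f := by
    intro X Y hXY
    have h0 : f (X - Y) = 0 := by rw [map_sub, hXY, sub_self]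
    rw [hfapp] at h0
    exact sub_eq_zero.mp (inj _ h0)
  have hfsurj : Function.Surjective f := LinearMap.surjective_of_injective hfinj
  obtain ⟨Xh, hXh0⟩ := hfsurj (-Q)
  have hXh : A * Xh * B + B * Xh * A = -Q := hXh0
  have uniqsol : ∀ X1 X2 : Matrix (Fin N) (Fin N) ℂ,
      A * X1 * B + B * X1 * A = -Q → A * X2 * B + B * X2 * A = -Q → X1 = X2 := by
    intro X1 X2 h1 h2
    refine sub_eq_zero.mp (inj (X1 - X2) ?_)
    have e : A * (X1 - X2) * B + B * (X1 - X2) * A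
        = (A * X1 * B + B * X1 * A) - (A * X2 * B + B * X2 * A) := by noncomm_ring
    rw [e, h1, h2, sub_self]
  have hXherm : Xh.IsHermitian := by
    have hadj : A * Xhᴴ * B + B * Xhᴴ * A = -Q := by
      have h0 := congrArg Matrix.conjTranspose hXh
      simp only [Matrix.conjTranspose_add, Matrix.conjTranspose_mul, Matrix.conjTranspose_neg,
        hA.eq, hB.eq, hQh.eq] at h0
      have e : A * Xhᴴ * B + B * Xhᴴ * A = B * (Xhᴴ * A) + A * (Xhᴴ * B) := by noncomm_ring
      rw [e, ← h0]
    exact uniqsol Xhᴴ Xh hadj hXh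
  -- the key identity at the solution
  have hkeyX := key_identity A B U V W hU hV hW Xh
  rw [hXh] at hkeyX
  -- contraction step for the two-sided bounds
  have hermLo : (Q - 2 • (U * Q * U + B * Q * B)).IsHermitian := hQh.sub hPhiQ_herm
  have hermHi : (Q + 2 • (V * Q * V + W * Q * W)).IsHermitian := hQh.add hPsiQ_herm
  have step2 : ∀ t : ℝ, 0 ≤ t →
      LoeLE ((Q - 2 • (U * Q * U + B * Q * B)) + ((-t : ℝ) : ℂ) • Q) Xh →
      LoeLE Xh ((Q + 2 • (V * Q * V + W * Q * W)) + ((t : ℝ) : ℂ) • Q) →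
      (LoeLE ((Q - 2 • (U * Q * U + B * Q * B)) + ((-(c * t) : ℝ) : ℂ) • Q) Xh ∧
       LoeLE Xh ((Q + 2 • (V * Q * V + W * Q * W)) + ((c * t : ℝ) : ℂ) • Q)) := by
    intro t ht hdl hdu
    -- bounds for Psi Xh from above and Phi Xh from below
    have hΨXu : LoeLE (2 • (V * Xh * V + W * Xh * W))
        ((2 • (V * Q * V + W * Q * W) + 2 • (V * Q * V + W * Q * W)) +
          ((t * β : ℝ) : ℂ) • Q) := by
      have h1 := qmap_mono (X := Xh)
        (Y := (Q + 2 • (V * Q * V + W * Q * W)) + ((t : ℝ) : ℂ) • Q) hV' hW' hdu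
      rw [qmap_hadd, qmap_hadd, qmap_hsmul] at h1
      refine loeLE_trans h1 ?_
      refine loeLE_add (loeLE_add (loeLE_refl _ hPsiQ_herm)
        (qmap_mono hV' hW' hPsiQ_le_Q)) ?_
      have h2 := loeLE_smul (t := t) ht hPsiβ
      rwa [smul_smul_c] at h2
    have hΦXl : LoeLE ((2 • (U * Q * U + B * Q * B) + -(2 • (U * Q * U + B * Q * B))) +
          ((-(t * α) : ℝ) : ℂ) • Q) (2 • (U * Xh * U + B * Xh * B)) := by
      have h1 := qmap_mono
        (X := (Q - 2 • (U * Q * U + B * Q * B)) + ((-t : ℝ) : ℂ) • Q) (Y := Xh) hU' hB hdl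
      have e : (Q - 2 • (U * Q * U + B * Q * B)) + ((-t : ℝ) : ℂ) • Q
          = (Q + (-1 : ℂ) • (2 • (U * Q * U + B * Q * B))) + ((-t : ℝ) : ℂ) • Q := by
        module
      rw [e, qmap_hadd, qmap_hadd, qmap_hsmul, qmap_hsmul] at h1
      refine loeLE_trans ?_ h1
      refine loeLE_add (loeLE_add (loeLE_refl _ hPhiQ_herm) ?_) ?_
      · have h2 := loeLE_neg (qmap_mono hU' hB hPhiQ_le_Q)
        refine loeLE_congr rfl ?_ h2
        module
      · exact loeLE_neg_smul t α ht hPhiα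
    -- bounds for Phi Xh from above and Psi Xh from below
    have hΦXu : LoeLE (2 • (U * Xh * U + B * Xh * B))
        ((2 • (U * Q * U + B * Q * B) + 2 • (U * Q * U + B * Q * B)) +
          ((t * α : ℝ) : ℂ) • Q) := by
      have h1 := qmap_mono (X := Xh)
        (Y := (Q + 2 • (V * Q * V + W * Q * W)) + ((t : ℝ) : ℂ) • Q) hU' hB hdu
      rw [qmap_hadd, qmap_hadd, qmap_hsmul] at h1
      refine loeLE_trans h1 ?_
      refine loeLE_add (loeLE_add (loeLE_refl _ hPhiQ_herm)
        (qmap_mono hU' hB hPsiQ_le_Q)) ?_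
      have h2 := loeLE_smul (t := t) ht hPhiα
      rwa [smul_smul_c] at h2
    have hΨXl : LoeLE ((2 • (V * Q * V + W * Q * W) + -(2 • (V * Q * V + W * Q * W))) +
          ((-(t * β) : ℝ) : ℂ) • Q) (2 • (V * Xh * V + W * Xh * W)) := by
      have h1 := qmap_mono
        (X := (Q - 2 • (U * Q * U + B * Q * B)) + ((-t : ℝ) : ℂ) • Q) (Y := Xh) hV' hW' hdl
      have e : (Q - 2 • (U * Q * U + B * Q * B)) + ((-t : ℝ) : ℂ) • Q
          = (Q + (-1 : ℂ) • (2 • (U * Q * U + B * Q * B))) + ((-t : ℝ) : ℂ) • Q := by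
        module
      rw [e, qmap_hadd, qmap_hadd, qmap_hsmul, qmap_hsmul] at h1
      refine loeLE_trans ?_ h1
      refine loeLE_add (loeLE_add (loeLE_refl _ hPsiQ_herm) ?_) ?_
      · have h2 := loeLE_neg (qmap_mono hV' hW' hPhiQ_le_Q)
        refine loeLE_congr rfl ?_ h2
        module
      · exact loeLE_neg_smul t β ht hPsiβ
    constructor
    · -- lower bound step
      refine loeLE_half (hermLo.add (herm_real_smul _ _ hQh)) hXherm ?_
      have hcomb := loeLE_add (loeLE_add hΨXl (loeLE_neg hΦXu))
        (loeLE_refl (Q + Q) (hQh.add hQh))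
      have eL : (2 • (V * Q * V + W * Q * W) + -(2 • (V * Q * V + W * Q * W)) +
            ((-(t * β) : ℝ) : ℂ) • Q) +
          -((2 • (U * Q * U + B * Q * B) + 2 • (U * Q * U + B * Q * B)) +
            ((t * α : ℝ) : ℂ) • Q) + (Q + Q)
          = ((Q - 2 • (U * Q * U + B * Q * B)) + (Q - 2 • (U * Q * U + B * Q * B))) +
            ((-(t * β) + -(t * α) : ℝ) : ℂ) • Q := by
        push_cast
        module
      have eR : 2 • (V * Xh * V + W * Xh * W) + -(2 • (U * Xh * U + B * Xh * B)) + (Q + Q)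
          = Xh + Xh := by
        rw [← sub_eq_add_neg, hkeyX, two_smul]
        abel
      have hcomb2 := loeLE_congr eL eR hcomb
      refine loeLE_trans ?_ hcomb2
      have hmono : LoeLE
          ((((-(c * t) + -(c * t)) : ℝ) : ℂ) • Q) (((-(t * β) + -(t * α) : ℝ) : ℂ) • Q) := by
        refine loeLE_smul_mono ?_ hQpsd
        have := hcsum t ht
        linarith
      have hfin := loeLE_add
        (loeLE_refl ((Q - 2 • (U * Q * U + B * Q * B)) + (Q - 2 • (U * Q * U + B * Q * B)))
          (hermLo.add hermLo)) hmono
      refine loeLE_congr ?_ rfl hfin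
      push_cast
      module
    · -- upper bound step
      refine loeLE_half hXherm (hermHi.add (herm_real_smul _ _ hQh)) ?_
      have hcomb := loeLE_add (loeLE_add hΨXu (loeLE_neg hΦXl))
        (loeLE_refl (Q + Q) (hQh.add hQh))
      have eL : 2 • (V * Xh * V + W * Xh * W) + -(2 • (U * Xh * U + B * Xh * B)) + (Q + Q)
          = Xh + Xh := by
        rw [← sub_eq_add_neg, hkeyX, two_smul]
        abel
      have eR : ((2 • (V * Q * V + W * Q * W) + 2 • (V * Q * V + W * Q * W)) +
            ((t * β : ℝ) : ℂ) • Q) +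
          -((2 • (U * Q * U + B * Q * B) + -(2 • (U * Q * U + B * Q * B))) +
            ((-(t * α) : ℝ) : ℂ) • Q) + (Q + Q)
          = ((Q + 2 • (V * Q * V + W * Q * W)) + (Q + 2 • (V * Q * V + W * Q * W))) +
            ((t * β + t * α : ℝ) : ℂ) • Q := by
        push_cast
        module
      have hcomb2 := loeLE_congr eL eR hcomb
      refine loeLE_trans hcomb2 ?_
      have hmono : LoeLE (((t * β + t * α : ℝ) : ℂ) • Q)
          ((((c * t) + (c * t) : ℝ) : ℂ) • Q) :=
        loeLE_smul_mono (hcsum t ht) hQpsd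
      have hfin := loeLE_add
        (loeLE_refl ((Q + 2 • (V * Q * V + W * Q * W)) + (Q + 2 • (V * Q * V + W * Q * W)))
          (hermHi.add hermHi)) hmono
      refine loeLE_congr rfl ?_ hfin
      push_cast
      module
  -- base case for the bound iteration
  obtain ⟨t₁, ht₁, hlow1, -⟩ := exists_bound_rel hQ (hXherm.sub hermLo)
  obtain ⟨t₂, ht₂, -, hup2⟩ := exists_bound_rel hQ (hXherm.sub hermHi)
  set t₀ := max t₁ t₂ with ht₀def
  have ht₀ : 0 ≤ t₀ := le_trans ht₁ (le_max_left _ _)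
  have hbase_low : LoeLE ((Q - 2 • (U * Q * U + B * Q * B)) + ((-t₀ : ℝ) : ℂ) • Q) Xh := by
    rw [LoeLE]
    rw [LoeLE] at hlow1
    have e : Xh - ((Q - 2 • (U * Q * U + B * Q * B)) + ((-t₀ : ℝ) : ℂ) • Q)
        = ((Xh - (Q - 2 • (U * Q * U + B * Q * B))) - -(((t₁ : ℝ) : ℂ) • Q))
          + ((t₀ - t₁ : ℝ) : ℂ) • Q := by
      push_cast
      module
    rw [e]
    exact hlow1.add (psd_smul (sub_nonneg.mpr (le_max_left t₁ t₂)) hQpsd)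
  have hbase_up : LoeLE Xh ((Q + 2 • (V * Q * V + W * Q * W)) + ((t₀ : ℝ) : ℂ) • Q) := by
    rw [LoeLE]
    rw [LoeLE] at hup2
    have e : ((Q + 2 • (V * Q * V + W * Q * W)) + ((t₀ : ℝ) : ℂ) • Q) - Xh
        = (((t₂ : ℝ) : ℂ) • Q - (Xh - (Q + 2 • (V * Q * V + W * Q * W))))
          + ((t₀ - t₂ : ℝ) : ℂ) • Q := by
      push_cast
      module
    rw [e]
    exact hup2.add (psd_smul (sub_nonneg.mpr (le_max_right t₁ t₂)) hQpsd)
  have iter2 : ∀ k : ℕ,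
      LoeLE ((Q - 2 • (U * Q * U + B * Q * B)) + ((-(c ^ k * t₀) : ℝ) : ℂ) • Q) Xh ∧
      LoeLE Xh ((Q + 2 • (V * Q * V + W * Q * W)) + ((c ^ k * t₀ : ℝ) : ℂ) • Q) := by
    intro k
    induction k with
    | zero =>
      constructor
      · refine loeLE_congr ?_ rfl hbase_low
        norm_num
      · refine loeLE_congr rfl ?_ hbase_up
        norm_num
    | succ k ih =>
      have h := step2 (c ^ k * t₀) (by positivity) ih.1 ih.2
      constructor
      · refine loeLE_congr ?_ rfl h.1
        ring_nf
      · refine loeLE_congr rfl ?_ h.2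
        ring_nf
  have keps : ∀ ε : ℝ, 0 < ε → ∃ k : ℕ, c ^ k * t₀ ≤ ε := by
    intro ε hε
    obtain ⟨k, hk⟩ := exists_pow_lt_of_lt_one (show (0:ℝ) < ε / (t₀ + 1) by positivity) hc1
    refine ⟨k, ?_⟩
    have h1 : c ^ k * t₀ ≤ (ε / (t₀ + 1)) * (t₀ + 1) := by
      have h2 : (0:ℝ) ≤ c ^ k := by positivity
      nlinarith
    rwa [div_mul_cancel₀ _ (by positivity : t₀ + 1 ≠ 0)] at h1
  have hfinal_low : (Xh - (Q - 2 • (U * Q * U + B * Q * B))).PosSemidef := by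
    have hlim : LoeLE ((Q - 2 • (U * Q * U + B * Q * B)) - Xh) 0 := by
      refine loeLE_zero_limit hQpsd (hermLo.sub hXherm) ?_
      intro ε hε
      obtain ⟨k, hk⟩ := keps ε hε
      have h1 := (iter2 k).1
      have h2 : LoeLE ((Q - 2 • (U * Q * U + B * Q * B)) - Xh)
          (((c ^ k * t₀ : ℝ) : ℂ) • Q) := by
        rw [LoeLE]
        rw [LoeLE] at h1
        have e : ((c ^ k * t₀ : ℝ) : ℂ) • Q - ((Q - 2 • (U * Q * U + B * Q * B)) - Xh)
            = Xh - ((Q - 2 • (U * Q * U + B * Q * B)) + ((-(c ^ k * t₀) : ℝ) : ℂ) • Q) := by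
          push_cast
          module
        rw [e]
        exact h1
      exact loeLE_trans h2 (loeLE_smul_mono hk hQpsd)
    rw [LoeLE] at hlim
    have e : (0 : Matrix (Fin N) (Fin N) ℂ) - ((Q - 2 • (U * Q * U + B * Q * B)) - Xh)
        = Xh - (Q - 2 • (U * Q * U + B * Q * B)) := by abel
    rwa [e] at hlim
  have hfinal_up : ((Q + 2 • (V * Q * V + W * Q * W)) - Xh).PosSemidef := by
    have hlim : LoeLE (Xh - (Q + 2 • (V * Q * V + W * Q * W))) 0 := by
      refine loeLE_zero_limit hQpsd (hXherm.sub hermHi) ?_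
      intro ε hε
      obtain ⟨k, hk⟩ := keps ε hε
      have h1 := (iter2 k).2
      have h2 : LoeLE (Xh - (Q + 2 • (V * Q * V + W * Q * W)))
          (((c ^ k * t₀ : ℝ) : ℂ) • Q) := by
        rw [LoeLE]
        rw [LoeLE] at h1
        have e : ((c ^ k * t₀ : ℝ) : ℂ) • Q - (Xh - (Q + 2 • (V * Q * V + W * Q * W)))
            = ((Q + 2 • (V * Q * V + W * Q * W)) + ((c ^ k * t₀ : ℝ) : ℂ) • Q) - Xh := by
          push_cast
          module
        rw [e]
        exact h1
      exact loeLE_trans h2 (loeLE_smul_mono hk hQpsd)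
    rw [LoeLE] at hlim
    have e : (0 : Matrix (Fin N) (Fin N) ℂ) - (Xh - (Q + 2 • (V * Q * V + W * Q * W)))
        = (Q + 2 • (V * Q * V + W * Q * W)) - Xh := by abel
    rwa [e] at hlim
  have hXpos : Xh.PosDef := by
    have h := hb.add_posSemidef hfinal_low
    have e : (Q - 2 • (U * Q * U + B * Q * B)) +
        (Xh - (Q - 2 • (U * Q * U + B * Q * B))) = Xh := by abel
    rwa [e] at h
  refine ⟨⟨Xh, ⟨hXpos, hXh⟩, ?_⟩, ?_⟩
  · rintro Y ⟨-, hYeq⟩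
    exact uniqsol Y Xh hYeq hXh
  · intro X hXpd hXeq
    rw [uniqsol X Xh hXeq hXh]
    exact ⟨hfinal_low, hfinal_up⟩
end

section
/- Let (Δ, ≤, d) be a complete partially ordered metric space and F : Δ × Δ → Δ a continuous mixed monotone mapping such that d(F(x,y), F(u,v)) ≤ (δ/2)[d(x,u) + d(y,v)] for all x ≥ u, y ≤ v, for some δ ∈ [0,1). Suppose there exist x₀ ≤ F(x₀,y₀) and y₀ ≥ F(y₀,x₀), and every pair of elements of Δ has an upper bound or a lower bound. Then there is a unique x̄ ∈ Δ with x̄ = F(x̄, x̄), and the sequences x_{n+1} = F(xₙ, yₙ), y_{n+1} = F(yₙ, xₙ) converge to x̄ with max{d(xₙ, x̄), d(yₙ, x̄)} ≤ (δⁿ/(1−δ)) max{d(x₀,x₁), d(y₀,y₁)}. -/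
open Matrix Filter
open scoped ComplexOrder

theorem stmt15 {Δ : Type*} [PartialOrder Δ] [MetricSpace Δ] [CompleteSpace Δ]
    (F : Δ → Δ → Δ) (hFc : Continuous fun p : Δ × Δ => F p.1 p.2)
    (hmono : ∀ x y u v : Δ, x ≤ u → v ≤ y → F x y ≤ F u v)
    (δ : ℝ) (hδ0 : 0 ≤ δ) (hδ1 : δ < 1)
    (hcontr : ∀ x y u v : Δ, u ≤ x → y ≤ v →
      dist (F x y) (F u v) ≤ δ / 2 * (dist x u + dist y v))
    (x₀ y₀ : Δ) (hx₀ : x₀ ≤ F x₀ y₀) (hy₀ : F y₀ x₀ ≤ y₀)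
    (hbound : ∀ a b : Δ, ∃ c : Δ, (a ≤ c ∧ b ≤ c) ∨ (c ≤ a ∧ c ≤ b)) :
    ∃ xb : Δ, F xb xb = xb ∧ (∀ z : Δ, F z z = z → z = xb) ∧
      ∀ x y : ℕ → Δ, x 0 = x₀ → y 0 = y₀ →
        (∀ n, x (n + 1) = F (x n) (y n)) → (∀ n, y (n + 1) = F (y n) (x n)) →
        Tendsto x atTop (nhds xb) ∧ Tendsto y atTop (nhds xb) ∧
        ∀ n, max (dist (x n) xb) (dist (y n) xb) ≤
          δ ^ n / (1 - δ) * max (dist (x 0) (x 1)) (dist (y 0) (y 1)) := by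
  classical
  set T : Δ × Δ → Δ × Δ := fun p => (F p.1 p.2, F p.2 p.1) with hTdef
  have hTc : Continuous T := hFc.prodMk (hFc.comp (continuous_snd.prodMk continuous_fst))
  -- the mixed order on the product
  set R : Δ × Δ → Δ × Δ → Prop := fun a b => a.1 ≤ b.1 ∧ b.2 ≤ a.2 with hRdef
  have hTmono : ∀ a b, R a b → R (T a) (T b) := by
    rintro ⟨x, y⟩ ⟨u, v⟩ ⟨h1, h2⟩
    exact ⟨hmono x y u v h1 h2, hmono v u y x h2 h1⟩
  have hTcontr : ∀ a b, R a b → dist (T a) (T b) ≤ δ * dist a b := by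
    rintro ⟨x, y⟩ ⟨u, v⟩ ⟨h1, h2⟩
    have e1 : dist (F u v) (F x y) ≤ δ / 2 * (dist u x + dist v y) := hcontr u v x y h1 h2
    have e2 : dist (F y x) (F v u) ≤ δ / 2 * (dist y v + dist x u) := hcontr y x v u h2 h1
    rw [Prod.dist_eq, Prod.dist_eq]
    have hxu : dist x u ≤ max (dist x u) (dist y v) := le_max_left _ _
    have hyv : dist y v ≤ max (dist x u) (dist y v) := le_max_right _ _
    have key : ∀ d1 : ℝ, d1 ≤ δ / 2 * (dist x u + dist y v) →
        d1 ≤ δ * max (dist x u) (dist y v) := by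
      intro d1 h
      refine h.trans ?_
      have : dist x u + dist y v ≤ 2 * max (dist x u) (dist y v) := by
        nlinarith
      nlinarith [le_max_left (dist x u) (dist y v), dist_nonneg (x := x) (y := u),
        dist_nonneg (x := y) (y := v)]
    apply max_le
    · apply key
      rw [show dist (F x y) (F u v) = dist (F u v) (F x y) from dist_comm _ _]
      calc dist (F u v) (F x y) ≤ δ / 2 * (dist u x + dist v y) := e1
        _ = δ / 2 * (dist x u + dist y v) := by rw [dist_comm u x, dist_comm v y]
    · apply key
      calc dist (F y x) (F v u) ≤ δ / 2 * (dist y v + dist x u) := e2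
        _ = δ / 2 * (dist x u + dist y v) := by ring
  -- comparability
  set C : Δ × Δ → Δ × Δ → Prop := fun a b => R a b ∨ R b a with hCdef
  have hCmono : ∀ a b, C a b → C (T a) (T b) := by
    rintro a b (h | h)
    · exact Or.inl (hTmono a b h)
    · exact Or.inr (hTmono b a h)
  have hCcontr : ∀ a b, C a b → dist (T a) (T b) ≤ δ * dist a b := by
    rintro a b (h | h)
    · exact hTcontr a b h
    · rw [dist_comm, dist_comm a b]; exact hTcontr b a h
  have hIter : ∀ n a b, C a b → dist (T^[n] a) (T^[n] b) ≤ δ ^ n * dist a b := by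
    intro n
    induction n with
    | zero => intro a b _; simp
    | succ n ih =>
      intro a b hab
      rw [Function.iterate_succ_apply', Function.iterate_succ_apply']
      have hC' : C (T^[n] a) (T^[n] b) := by
        clear ih
        induction n with
        | zero => simpa using hab
        | succ n ih2 =>
          rw [Function.iterate_succ_apply', Function.iterate_succ_apply']
          exact hCmono _ _ ih2
      calc dist (T (T^[n] a)) (T (T^[n] b)) ≤ δ * dist (T^[n] a) (T^[n] b) :=
            hCcontr _ _ hC'
        _ ≤ δ * (δ ^ n * dist a b) := by
            have := ih a b hab
            nlinarith [dist_nonneg (x := T^[n] a) (y := T^[n] b)]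
        _ = δ ^ (n + 1) * dist a b := by ring
  -- two fixed points of T joined by a comparability chain are equal
  have hchain : ∀ P P' Q₁ Q₂ Q₃ : Δ × Δ, T P = P → T P' = P' →
      C P Q₁ → C Q₁ Q₂ → C Q₂ Q₃ → C Q₃ P' → P = P' := by
    intro P P' Q₁ Q₂ Q₃ hP hP' h1 h2 h3 h4
    have key : ∀ n, dist P P' ≤
        δ ^ n * (dist P Q₁ + dist Q₁ Q₂ + dist Q₂ Q₃ + dist Q₃ P') := by
      intro n
      have e1 := hIter n P Q₁ h1
      have e2 := hIter n Q₁ Q₂ h2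
      have e3 := hIter n Q₂ Q₃ h3
      have e4 := hIter n Q₃ P' h4
      have hPn : T^[n] P = P := Function.iterate_fixed hP n
      have hP'n : T^[n] P' = P' := Function.iterate_fixed hP' n
      rw [hPn] at e1
      rw [hP'n] at e4
      calc dist P P' ≤ dist P (T^[n] Q₁) + dist (T^[n] Q₁) (T^[n] Q₂)
            + dist (T^[n] Q₂) (T^[n] Q₃) + dist (T^[n] Q₃) P' := by
            exact dist_triangle4 _ _ _ _ |>.trans (by
              gcongr
              exact dist_triangle _ _ _)
        _ ≤ δ ^ n * dist P Q₁ + δ ^ n * dist Q₁ Q₂ + δ ^ n * dist Q₂ Q₃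
            + δ ^ n * dist Q₃ P' := by gcongr
        _ = δ ^ n * (dist P Q₁ + dist Q₁ Q₂ + dist Q₂ Q₃ + dist Q₃ P') := by ring
    have htend : Tendsto (fun n : ℕ => δ ^ n *
        (dist P Q₁ + dist Q₁ Q₂ + dist Q₂ Q₃ + dist Q₃ P')) atTop (nhds 0) := by
      have := (tendsto_pow_atTop_nhds_zero_of_lt_one hδ0 hδ1).mul_const
        (dist P Q₁ + dist Q₁ Q₂ + dist Q₂ Q₃ + dist Q₃ P')
      simpa using this
    have hd0 : dist P P' ≤ 0 := ge_of_tendsto' htend key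
    exact dist_le_zero.mp hd0
  -- reflexivity of C
  have hCrefl : ∀ a, C a a := fun a => Or.inl ⟨le_refl _, le_refl _⟩
  -- the canonical sequence
  set X : ℕ → Δ × Δ := fun n => T^[n] (x₀, y₀) with hXdef
  have hXsucc : ∀ n, X (n + 1) = T (X n) := by
    intro n; simp [hXdef, Function.iterate_succ_apply']
  have hXord : ∀ n, R (X n) (X (n + 1)) := by
    intro n
    induction n with
    | zero =>
      rw [hXsucc 0]
      exact ⟨hx₀, hy₀⟩
    | succ n ih =>
      have h := hTmono _ _ ih
      rw [← hXsucc n, ← hXsucc (n + 1)] at h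
      exact h
  have hXdist : ∀ n, dist (X n) (X (n + 1)) ≤ dist (X 0) (X 1) * δ ^ n := by
    intro n
    induction n with
    | zero => simp
    | succ n ih =>
      have h := hTcontr _ _ (hXord n)
      rw [← hXsucc n, ← hXsucc (n + 1)] at h
      calc dist (X (n + 1)) (X (n + 2)) ≤ δ * dist (X n) (X (n + 1)) := h
        _ ≤ δ * (dist (X 0) (X 1) * δ ^ n) := by nlinarith [dist_nonneg (x := X n) (y := X (n+1))]
        _ = dist (X 0) (X 1) * δ ^ (n + 1) := by ring
  have hcauchy : CauchySeq X := cauchySeq_of_le_geometric δ (dist (X 0) (X 1)) hδ1 hXdist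
  obtain ⟨L, hL⟩ := cauchySeq_tendsto_of_complete hcauchy
  have hTL : T L = L := by
    have h1 : Tendsto (fun n => T (X n)) atTop (nhds (T L)) := (hTc.tendsto L).comp hL
    have h2 : Tendsto (fun n => X (n + 1)) atTop (nhds L) := hL.comp (tendsto_add_atTop_nat 1)
    have h3 : Tendsto (fun n => T (X n)) atTop (nhds L) := by
      simpa only [← hXsucc] using h2
    exact tendsto_nhds_unique h1 h3
  -- show L.1 = L.2 using the bound hypothesis
  have hLL : L.1 = L.2 := by
    obtain ⟨c, hc⟩ := hbound L.1 L.2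
    have hP' : T (L.2, L.1) = (L.2, L.1) := by
      have := hTL
      simp only [hTdef, Prod.ext_iff] at this ⊢
      exact ⟨this.2, this.1⟩
    have : L = (L.2, L.1) := by
      rcases hc with ⟨h1, h2⟩ | ⟨h1, h2⟩
      · -- c is an upper bound: chain L, (L.1, c), (c, L.1), (L.2, L.1)
        refine hchain L (L.2, L.1) (L.1, c) (c, L.1) (L.2, L.1) hTL hP' ?_ ?_ ?_ (hCrefl _)
        · exact Or.inr ⟨le_refl _, h2⟩
        · exact Or.inl ⟨h1, h1⟩
        · exact Or.inr ⟨h2, le_refl _⟩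
      · -- c is a lower bound
        refine hchain L (L.2, L.1) (L.1, c) (c, L.1) (L.2, L.1) hTL hP' ?_ ?_ ?_ (hCrefl _)
        · exact Or.inl ⟨le_refl _, h2⟩
        · exact Or.inr ⟨h1, h1⟩
        · exact Or.inl ⟨h2, le_refl _⟩
    exact (Prod.ext_iff.mp this).1
  have hLfix : F L.1 L.1 = L.1 := by
    have := congrArg Prod.fst hTL
    simp only [hTdef] at this
    rw [← hLL] at this
    exact this
  refine ⟨L.1, hLfix, ?_, ?_⟩
  · -- uniqueness
    intro z hz
    have hPz : T (z, z) = (z, z) := by simp [hTdef, hz]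
    have hPL : T (L.1, L.1) = (L.1, L.1) := by simp [hTdef, hLfix]
    obtain ⟨c, hc⟩ := hbound z L.1
    have : (z, z) = (L.1, L.1) := by
      rcases hc with ⟨h1, h2⟩ | ⟨h1, h2⟩
      · refine hchain (z, z) (L.1, L.1) (z, c) (c, z) (L.1, c) hPz hPL ?_ ?_ ?_ ?_
        · exact Or.inr ⟨le_refl _, h1⟩
        · exact Or.inl ⟨h1, h1⟩
        · exact Or.inr ⟨h2, h1⟩
        · exact Or.inl ⟨le_refl _, h2⟩
      · refine hchain (z, z) (L.1, L.1) (z, c) (c, z) (L.1, c) hPz hPL ?_ ?_ ?_ ?_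
        · exact Or.inl ⟨le_refl _, h1⟩
        · exact Or.inr ⟨h1, h1⟩
        · exact Or.inl ⟨h2, h1⟩
        · exact Or.inr ⟨le_refl _, h2⟩
    exact (Prod.ext_iff.mp this).1
  · -- the sequences
    intro x y hx0 hy0 hxs hys
    have hxy : ∀ n, x n = (X n).1 ∧ y n = (X n).2 := by
      intro n
      induction n with
      | zero => simp [hXdef, hx0, hy0]
      | succ n ih =>
        rw [hxs n, hys n, ih.1, ih.2, hXsucc n]
        exact ⟨rfl, rfl⟩
    have hLeq : L = (L.1, L.1) := by
      rw [Prod.ext_iff]; exact ⟨rfl, hLL.symm⟩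
    have htx : Tendsto x atTop (nhds L.1) := by
      have : Tendsto (fun n => (X n).1) atTop (nhds L.1) := (continuous_fst.tendsto L).comp hL
      have hfe : x = fun n => (X n).1 := funext fun n => (hxy n).1
      rwa [hfe]
    have hty : Tendsto y atTop (nhds L.1) := by
      have : Tendsto (fun n => (X n).2) atTop (nhds L.2) := (continuous_snd.tendsto L).comp hL
      have hfe : y = fun n => (X n).2 := funext fun n => (hxy n).2
      rw [hfe, hLL]
      exact this
    refine ⟨htx, hty, ?_⟩
    intro n
    have hb := dist_le_of_le_geometric_of_tendsto δ (dist (X 0) (X 1)) hδ1 hXdist hL n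
    have heq1 : max (dist (x n) L.1) (dist (y n) L.1) = dist (X n) L := by
      rw [(hxy n).1, (hxy n).2]
      conv_rhs => rw [hLeq]
      rw [Prod.dist_eq]
    have heq2 : max (dist (x 0) (x 1)) (dist (y 0) (y 1)) = dist (X 0) (X 1) := by
      rw [(hxy 0).1, (hxy 0).2, (hxy 1).1, (hxy 1).2, Prod.dist_eq]
    rw [heq1, heq2]
    calc dist (X n) L ≤ dist (X 0) (X 1) * δ ^ n / (1 - δ) := hb
      _ = δ ^ n / (1 - δ) * dist (X 0) (X 1) := by ring
end
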